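/- arXiv:1103.3843 — 9 statements merged into one kernel-verified Lean document; each statement's English description precedes it below -/
import Mathlib

section
/- Let (X,d,ν) be a metric measure space where ν is a Borel measure with 0 < ν(X) < ∞ and supp ν = X, and suppose diam X < D and that (X,d,ν) satisfies the Bishop–Gromov comparison with parameters (K,N), where N > 1 and, if K > 0, additionally D ≤ π·√((N−1)/K). Let 0 < ε < 2D. If p₁,…,p_n are points of X such that the open balls B(p_k, ε/2), k = 1,…,n, are pairwise disjoint, then n · ∫₀^{ε/2} S_K^N(t) dt ≤ ∫₀^{D} S_K^N(t) dt. -/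
open MeasureTheory Metric ENNReal

/-- The comparison function `S_K^N`. -/
noncomputable def SKN (K N t : ℝ) : ℝ :=
  if 0 < K then Real.sin (Real.sqrt (K / (N - 1)) * t) ^ (N - 1)
  else if K = 0 then t ^ (N - 1)
  else Real.sinh (Real.sqrt (|K| / (N - 1)) * t) ^ (N - 1)

/-- `(X,d,ν)` satisfies the Bishop–Gromov comparison with parameters `(K,N)`:
for every `x` and all `0 < r ≤ R`,
`ν(B(x,r)) · ∫₀^R S_K^N ≥ ν(B(x,R)) · ∫₀^r S_K^N`. -/
def BishopGromov {X : Type*} [MetricSpace X] [MeasurableSpace X]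
    (ν : Measure X) (K N : ℝ) : Prop :=
  ∀ (x : X) (r R : ℝ), 0 < r → r ≤ R →
    ν (ball x R) * ENNReal.ofReal (∫ t in (0:ℝ)..r, SKN K N t) ≤
      ν (ball x r) * ENNReal.ofReal (∫ t in (0:ℝ)..R, SKN K N t)

lemma SKN_nonneg (K N D : ℝ) (hN : 1 < N)
    (hK : 0 < K → D ≤ Real.pi * Real.sqrt ((N - 1) / K)) :
    ∀ t ∈ Set.Icc (0:ℝ) D, 0 ≤ SKN K N t := by
  intro t ht
  obtain ⟨ht0, htD⟩ := ht
  unfold SKN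
  split_ifs with h1 h2
  · apply Real.rpow_nonneg
    apply Real.sin_nonneg_of_nonneg_of_le_pi
    · positivity
    · have h3 : Real.sqrt (K / (N - 1)) * t ≤ Real.sqrt (K / (N - 1)) * D :=
        mul_le_mul_of_nonneg_left htD (Real.sqrt_nonneg _)
      have h4 : Real.sqrt (K / (N - 1)) * D ≤
          Real.sqrt (K / (N - 1)) * (Real.pi * Real.sqrt ((N - 1) / K)) :=
        mul_le_mul_of_nonneg_left (hK h1) (Real.sqrt_nonneg _)
      have hNK : (0:ℝ) < N - 1 := by linarith
      have h5 : Real.sqrt (K / (N - 1)) * Real.sqrt ((N - 1) / K) = 1 := by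
        rw [← Real.sqrt_mul (by positivity)]
        rw [show K / (N - 1) * ((N - 1) / K) = 1 by field_simp]
        exact Real.sqrt_one
      calc Real.sqrt (K / (N - 1)) * t ≤ _ := h3
        _ ≤ _ := h4
        _ = Real.pi := by rw [show Real.sqrt (K / (N - 1)) * (Real.pi * Real.sqrt ((N - 1) / K))
              = Real.pi * (Real.sqrt (K / (N - 1)) * Real.sqrt ((N - 1) / K)) by ring, h5, mul_one]
  · exact Real.rpow_nonneg ht0 _
  · exact Real.rpow_nonneg (by positivity) _

theorem stmt0 {X : Type*} [MetricSpace X] [MeasurableSpace X] [BorelSpace X]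
    (ν : Measure X) (K N D ε : ℝ) (hN : 1 < N)
    (hν0 : 0 < ν Set.univ) (hνfin : ν Set.univ < ⊤)
    (hsupp : ∀ (x : X) (r : ℝ), 0 < r → 0 < ν (ball x r))
    (hdiam : EMetric.diam (Set.univ : Set X) < ENNReal.ofReal D)
    (hK : 0 < K → D ≤ Real.pi * Real.sqrt ((N - 1) / K))
    (hBG : BishopGromov ν K N)
    (hε : 0 < ε) (hεD : ε < 2 * D)
    (n : ℕ) (p : Fin n → X)
    (hdisj : ∀ i j : Fin n, i ≠ j →
      Disjoint (ball (p i) (ε / 2)) (ball (p j) (ε / 2))) :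
    (n : ℝ) * ∫ t in (0:ℝ)..(ε / 2), SKN K N t ≤ ∫ t in (0:ℝ)..D, SKN K N t := by
  have hε2 : (0:ℝ) < ε / 2 := by linarith
  have hε2D : ε / 2 ≤ D := by linarith
  have hD : (0:ℝ) < D := by linarith
  have hS := SKN_nonneg K N D hN hK
  set a : ℝ := ∫ t in (0:ℝ)..(ε / 2), SKN K N t with ha
  set b : ℝ := ∫ t in (0:ℝ)..D, SKN K N t with hb
  have hb0 : 0 ≤ b :=
    intervalIntegral.integral_nonneg hD.le (fun t ht => hS t ht)
  have ha0 : 0 ≤ a :=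
    intervalIntegral.integral_nonneg hε2.le
      (fun t ht => hS t ⟨ht.1, ht.2.trans hε2D⟩)
  -- balls of radius D are the whole space
  have hballD : ∀ x : X, ball x D = Set.univ := by
    intro x
    ext y
    simp only [Set.mem_univ, iff_true, mem_ball]
    have : edist y x < ENNReal.ofReal D :=
      lt_of_le_of_lt (EMetric.edist_le_diam_of_mem (Set.mem_univ y) (Set.mem_univ x)) hdiam
    rwa [edist_dist, ENNReal.ofReal_lt_ofReal_iff hD] at this
  -- key inequality in ENNReal
  have key : ∀ k : Fin n, ν Set.univ * ENNReal.ofReal a ≤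
      ν (ball (p k) (ε / 2)) * ENNReal.ofReal b := by
    intro k
    have := hBG (p k) (ε / 2) D hε2 hε2D
    rwa [hballD (p k)] at this
  have hsum : (n : ℝ≥0∞) * (ν Set.univ * ENNReal.ofReal a) ≤
      ν Set.univ * ENNReal.ofReal b := by
    calc (n : ℝ≥0∞) * (ν Set.univ * ENNReal.ofReal a)
        = ∑ k : Fin n, ν Set.univ * ENNReal.ofReal a := by
          simp [Finset.sum_const, nsmul_eq_mul]
      _ ≤ ∑ k : Fin n, ν (ball (p k) (ε / 2)) * ENNReal.ofReal b :=
          Finset.sum_le_sum (fun k _ => key k)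
      _ = (∑ k : Fin n, ν (ball (p k) (ε / 2))) * ENNReal.ofReal b := by
          rw [Finset.sum_mul]
      _ ≤ ν Set.univ * ENNReal.ofReal b := by
          apply mul_le_mul_left
          exact sum_measure_le_measure_univ
            (fun k _ => measurableSet_ball.nullMeasurableSet)
            (fun i _ j _ hij => (hdisj i j hij).aedisjoint)
  have hcancel : (n : ℝ≥0∞) * ENNReal.ofReal a ≤ ENNReal.ofReal b := by
    have h := hsum
    rw [show (n : ℝ≥0∞) * (ν Set.univ * ENNReal.ofReal a)
        = ν Set.univ * ((n : ℝ≥0∞) * ENNReal.ofReal a) by ring] at h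
    exact (ENNReal.mul_le_mul_iff_right hν0.ne' hνfin.ne).mp h
  have : ENNReal.ofReal ((n : ℝ) * a) ≤ ENNReal.ofReal b := by
    rwa [ENNReal.ofReal_mul (by positivity), ENNReal.ofReal_natCast]
  rwa [ENNReal.ofReal_le_ofReal_iff hb0] at this
end

section
/- Let (X,d,ν) be a metric measure space where ν is a Borel measure with 0 < ν(X) < ∞ and supp ν = X, and suppose diam X < D and that (X,d,ν) satisfies the Bishop–Gromov comparison with parameters (K,N), where N > 1 and, if K > 0, additionally 9ε/2 ≤ π·√((N−1)/K). Let ε > 0 and let p₁,…,p_n be points of X such that the open balls B(p_k, ε/2) are pairwise disjoint. Then for every x ∈ X, the number m of indices j ∈ {1,…,n} such that B(x,ε) ∩ B(p_j,ε) ≠ ∅ satisfies m · ∫₀^{ε/2} S_K^N(t) dt ≤ ∫₀^{9ε/2} S_K^N(t) dt. In particular this bound is independent of x. -/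
open MeasureTheory Metric

theorem stmt1 {X : Type*} [MetricSpace X] [MeasurableSpace X] [BorelSpace X]
    (ν : Measure X) (K N D ε : ℝ) (hN : 1 < N)
    (hν0 : 0 < ν Set.univ) (hνfin : ν Set.univ < ⊤)
    (hsupp : ∀ (x : X) (r : ℝ), 0 < r → 0 < ν (ball x r))
    (hdiam : EMetric.diam (Set.univ : Set X) < ENNReal.ofReal D)
    (hK : 0 < K → 9 * ε / 2 ≤ Real.pi * Real.sqrt ((N - 1) / K))
    (hBG : BishopGromov ν K N)
    (hε : 0 < ε)
    (n : ℕ) (p : Fin n → X)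
    (hdisj : ∀ i j : Fin n, i ≠ j →
      Disjoint (ball (p i) (ε / 2)) (ball (p j) (ε / 2)))
    (x : X) :
    (Nat.card {j : Fin n // (ball x ε ∩ ball (p j) ε).Nonempty} : ℝ) *
        ∫ t in (0:ℝ)..(ε / 2), SKN K N t ≤
      ∫ t in (0:ℝ)..(9 * ε / 2), SKN K N t := by
  classical
  have hN1 : (0:ℝ) < N - 1 := by linarith
  have hSKN : ∀ t, 0 ≤ t → t ≤ 9 * ε / 2 → 0 ≤ SKN K N t := by
    intro t ht0 ht1
    unfold SKN
    split_ifs with h1 h2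
    · apply Real.rpow_nonneg
      apply Real.sin_nonneg_of_nonneg_of_le_pi
      · positivity
      · have hs : Real.sqrt (K / (N - 1)) * (9 * ε / 2) ≤ Real.pi := by
          have h9 := hK h1
          calc Real.sqrt (K / (N - 1)) * (9 * ε / 2)
              ≤ Real.sqrt (K / (N - 1)) * (Real.pi * Real.sqrt ((N - 1) / K)) :=
                mul_le_mul_of_nonneg_left h9 (Real.sqrt_nonneg _)
            _ = Real.pi * (Real.sqrt (K / (N - 1)) * Real.sqrt ((N - 1) / K)) := by ring
            _ = Real.pi := by
                rw [← Real.sqrt_mul (by positivity)]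
                have h1' : K / (N - 1) * ((N - 1) / K) = 1 := by
                  field_simp
                rw [h1', Real.sqrt_one, mul_one]
        calc Real.sqrt (K / (N - 1)) * t ≤ Real.sqrt (K / (N - 1)) * (9 * ε / 2) :=
              mul_le_mul_of_nonneg_left ht1 (Real.sqrt_nonneg _)
          _ ≤ Real.pi := hs
    · exact Real.rpow_nonneg ht0 _
    · exact Real.rpow_nonneg (by positivity) _
  set I1 : ℝ := ∫ t in (0:ℝ)..(ε / 2), SKN K N t with hI1def
  set I2 : ℝ := ∫ t in (0:ℝ)..(9 * ε / 2), SKN K N t with hI2def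
  have hI2 : 0 ≤ I2 := by
    apply intervalIntegral.integral_nonneg (by linarith)
    intro u hu
    exact hSKN u hu.1 hu.2
  set B := ball x (5 * ε / 2) with hBdef
  have hBfin : ν B ≠ ⊤ := (lt_of_le_of_lt (measure_mono (Set.subset_univ _)) hνfin).ne
  have hBpos : ν B ≠ 0 := (hsupp x _ (by positivity)).ne'
  set s : Finset (Fin n) := Finset.univ.filter (fun j => (ball x ε ∩ ball (p j) ε).Nonempty)
    with hsdef
  have hcard : Nat.card {j : Fin n // (ball x ε ∩ ball (p j) ε).Nonempty} = s.card := by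
    rw [Nat.card_eq_fintype_card, Fintype.card_subtype]
  have hdxp : ∀ j ∈ s, dist x (p j) < 2 * ε := by
    intro j hj
    simp only [hsdef, Finset.mem_filter] at hj
    obtain ⟨y, hy1, hy2⟩ := hj.2
    rw [mem_ball] at hy1 hy2
    calc dist x (p j) ≤ dist x y + dist y (p j) := dist_triangle _ _ _
      _ < 2 * ε := by rw [dist_comm x y]; linarith
  have key : ∀ j ∈ s, ν B * ENNReal.ofReal I1 ≤ ν (ball (p j) (ε / 2)) * ENNReal.ofReal I2 := by
    intro j hj
    have hsub : B ⊆ ball (p j) (9 * ε / 2) := by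
      intro z hz
      rw [hBdef, mem_ball] at hz
      rw [mem_ball]
      calc dist z (p j) ≤ dist z x + dist x (p j) := dist_triangle _ _ _
        _ < 9 * ε / 2 := by have := hdxp j hj; linarith
    calc ν B * ENNReal.ofReal I1 ≤ ν (ball (p j) (9 * ε / 2)) * ENNReal.ofReal I1 :=
          mul_le_mul_left (measure_mono hsub) _
      _ ≤ ν (ball (p j) (ε / 2)) * ENNReal.ofReal I2 :=
          hBG (p j) (ε / 2) (9 * ε / 2) (by positivity) (by linarith)
  have hsum : (s.card : ENNReal) * (ν B * ENNReal.ofReal I1) ≤ ν B * ENNReal.ofReal I2 := by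
    calc (s.card : ENNReal) * (ν B * ENNReal.ofReal I1)
        = ∑ _j ∈ s, ν B * ENNReal.ofReal I1 := by rw [Finset.sum_const, nsmul_eq_mul]
      _ ≤ ∑ j ∈ s, ν (ball (p j) (ε / 2)) * ENNReal.ofReal I2 := Finset.sum_le_sum key
      _ = (∑ j ∈ s, ν (ball (p j) (ε / 2))) * ENNReal.ofReal I2 := (Finset.sum_mul _ _ _).symm
      _ ≤ ν B * ENNReal.ofReal I2 := by
          apply mul_le_mul_left
          rw [← measure_biUnion_finset ?_ (fun j _ => measurableSet_ball)]
          · apply measure_mono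
            intro z hz
            simp only [Set.mem_iUnion] at hz
            obtain ⟨j, hj, hzj⟩ := hz
            have hj' := hdxp j hj
            rw [mem_ball] at hzj
            rw [hBdef, mem_ball]
            calc dist z x ≤ dist z (p j) + dist (p j) x := dist_triangle _ _ _
              _ < 5 * ε / 2 := by rw [dist_comm (p j) x]; linarith
          · intro i _ j _ hij
            exact hdisj i j hij
  rw [← mul_assoc, mul_comm ((s.card : ENNReal)) (ν B), mul_assoc] at hsum
  have hmain := (ENNReal.mul_le_mul_iff_right hBpos hBfin).mp hsum
  rw [← ENNReal.ofReal_natCast, ← ENNReal.ofReal_mul (by positivity)] at hmain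
  have hfin : (s.card : ℝ) * I1 ≤ I2 := (ENNReal.ofReal_le_ofReal_iff hI2).mp hmain
  rw [hcard]
  exact_mod_cast hfin
end

section
/- For every K ≥ 1 there exists s₀ = s₀(K) > 0 such that for every set X, every K-quasimetric q on X, and every 0 < s ≤ s₀, there exist a constant C = C(s,K) ≥ 1 and a metric d_s on X satisfying (1/C) · q(x,y)^s ≤ d_s(x,y) ≤ C · q(x,y)^s for all x, y ∈ X. -/
/-- A `K`-quasimetric on a set `X`. -/
def IsQuasimetric {X : Type*} (K : ℝ) (q : X → X → ℝ) : Prop :=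
  (∀ x y, 0 ≤ q x y) ∧ (∀ x y, q x y = 0 ↔ x = y) ∧ (∀ x y, q x y = q y x) ∧
    ∀ x y z, q x y ≤ K * (q x z + q z y)

/-- A metric, given as a distance function. -/
def IsMetricFun {X : Type*} (d : X → X → ℝ) : Prop :=
  (∀ x y, 0 ≤ d x y) ∧ (∀ x y, d x y = 0 ↔ x = y) ∧ (∀ x y, d x y = d y x) ∧
    ∀ x y z, d x y ≤ d x z + d z y

theorem stmt5 (K : ℝ) (hK : 1 ≤ K) :
    ∃ s₀ : ℝ, 0 < s₀ ∧
      ∀ (X : Type) (q : X → X → ℝ), IsQuasimetric K q →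
        ∀ s : ℝ, 0 < s → s ≤ s₀ →
          ∃ C : ℝ, 1 ≤ C ∧ ∃ d : X → X → ℝ, IsMetricFun d ∧
            ∀ x y : X, (1 / C) * q x y ^ s ≤ d x y ∧ d x y ≤ C * q x y ^ s := by
  have h3K : (1:ℝ) < 3 * K ^ 2 := by nlinarith
  refine ⟨Real.logb (3 * K ^ 2) 2, Real.logb_pos h3K one_lt_two, ?_⟩
  intro X q hq s hs hss
  obtain ⟨hq0, hqeq, hqsym, hqtri⟩ := hq
  -- the key exponent bound
  have hpow : (3 * K ^ 2 : ℝ) ^ s ≤ 2 := by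
    calc (3 * K ^ 2 : ℝ) ^ s ≤ (3 * K ^ 2 : ℝ) ^ Real.logb (3 * K ^ 2) 2 :=
          Real.rpow_le_rpow_of_exponent_le h3K.le hss
      _ = 2 := Real.rpow_logb (by linarith) (by linarith) two_pos
  -- ρ = q^s as an ℝ≥0-valued function
  set ρ : X → X → NNReal := fun x y => ⟨q x y ^ s, Real.rpow_nonneg (hq0 x y) s⟩ with hρ
  have hρself : ∀ x, ρ x x = 0 := by
    intro x
    have : q x x = 0 := (hqeq x x).2 rfl
    ext
    simp [hρ, this, Real.zero_rpow hs.ne']; rfl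
  have hρcomm : ∀ x y, ρ x y = ρ y x := by
    intro x y; ext; simp [hρ, hqsym x y]
  -- quadrilateral inequality
  have hd : ∀ x₁ x₂ x₃ x₄, ρ x₁ x₄ ≤ 2 * max (ρ x₁ x₂) (max (ρ x₂ x₃) (ρ x₃ x₄)) := by
    intro a b c e
    rw [← NNReal.coe_le_coe]
    push_cast
    set M : ℝ := max (q a b) (max (q b c) (q c e)) with hM
    have hM0 : 0 ≤ M := le_trans (hq0 a b) (le_max_left _ _)
    have h1 : q a e ≤ 3 * K ^ 2 * M := by
      have t1 : q a e ≤ K * (q a b + q b e) := hqtri a e b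
      have t2 : q b e ≤ K * (q b c + q c e) := hqtri b e c
      have m1 : q a b ≤ M := le_max_left _ _
      have m2 : q b c ≤ M := le_trans (le_max_left _ _) (le_max_right _ _)
      have m3 : q c e ≤ M := le_trans (le_max_right _ _) (le_max_right _ _)
      have hKpos : (0:ℝ) ≤ K := by linarith
      have t3 : q b e ≤ K * (2 * M) := le_trans t2 (by nlinarith)
      calc q a e ≤ K * (q a b + q b e) := t1
        _ ≤ K * (M + K * (2 * M)) := by
            apply mul_le_mul_of_nonneg_left _ hKpos
            exact add_le_add m1 t3
        _ = K * M + 2 * K ^ 2 * M := by ring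
        _ ≤ 3 * K ^ 2 * M := by nlinarith [mul_nonneg (sub_nonneg.2 hK) hM0,
            mul_le_mul_of_nonneg_right hK (mul_nonneg hKpos hM0)]
    have h2 : q a e ^ s ≤ (3 * K ^ 2 * M) ^ s :=
      Real.rpow_le_rpow (hq0 a e) h1 hs.le
    have h3 : (3 * K ^ 2 * M) ^ s = (3 * K ^ 2) ^ s * M ^ s :=
      Real.mul_rpow (by linarith) hM0
    have hmax : ∀ u v : ℝ, 0 ≤ u → 0 ≤ v → max u v ^ s = max (u ^ s) (v ^ s) := by
      intro u v hu hv
      rcases le_total u v with h | h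
      · rw [max_eq_right h, max_eq_right (Real.rpow_le_rpow hu h hs.le)]
      · rw [max_eq_left h, max_eq_left (Real.rpow_le_rpow hv h hs.le)]
    have h4 : M ^ s = max (q a b ^ s) (max (q b c ^ s) (q c e ^ s)) := by
      rw [hM, hmax _ _ (hq0 a b) (le_trans (hq0 b c) (le_max_left _ _)),
        hmax _ _ (hq0 b c) (hq0 c e)]
    calc q a e ^ s ≤ (3 * K ^ 2) ^ s * M ^ s := by rw [← h3]; exact h2
      _ ≤ 2 * M ^ s := by
          have : 0 ≤ M ^ s := Real.rpow_nonneg hM0 s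
          nlinarith
      _ = 2 * max (q a b ^ s) (max (q b c ^ s) (q c e ^ s)) := by rw [h4]
  -- build the metric
  let D := PseudoMetricSpace.ofPreNNDist ρ hρself hρcomm
  let d : X → X → ℝ := fun x y => @dist X D.toDist x y
  have hdle : ∀ x y, d x y ≤ q x y ^ s := fun x y =>
    PseudoMetricSpace.dist_ofPreNNDist_le ρ hρself hρcomm x y
  have hled : ∀ x y, q x y ^ s ≤ 2 * d x y := fun x y =>
    PseudoMetricSpace.le_two_mul_dist_ofPreNNDist ρ hρself hρcomm hd x y
  have hdnn : ∀ x y, 0 ≤ d x y := fun x y => @dist_nonneg X D x y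
  refine ⟨2, one_le_two, d, ⟨hdnn, ?_, fun x y => @dist_comm X D x y,
    fun x y z => @dist_triangle X D x z y⟩, ?_⟩
  · intro x y
    constructor
    · intro h
      have h1 : q x y ^ s ≤ 0 := by have := hled x y; rw [h] at this; linarith
      have h2 : q x y ^ s = 0 := le_antisymm h1 (Real.rpow_nonneg (hq0 x y) s)
      have h3 : q x y = 0 := by
        by_contra hne
        have hpos : 0 < q x y := lt_of_le_of_ne (hq0 x y) (Ne.symm hne)
        exact absurd h2 (ne_of_gt (Real.rpow_pos_of_pos hpos s))
      exact (hqeq x y).1 h3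
    · rintro rfl
      have h1 := hdle x x
      have h2 : q x x = 0 := (hqeq x x).2 rfl
      have := hdnn x x
      rw [h2, Real.zero_rpow hs.ne'] at h1
      linarith
  · intro x y
    refine ⟨?_, ?_⟩
    · have := hled x y; linarith
    · have := hdle x y
      have : 0 ≤ q x y ^ s := Real.rpow_nonneg (hq0 x y) s
      nlinarith [hdle x y]
end

section
/- Let q be a K-quasimetric on a set X, with K ≥ 1, and let s > 0 satisfy (2K)^{2s} ≤ 2. Then there exists a metric d_s on X such that (2K)^{−2s} · q(x,y)^s ≤ d_s(x,y) ≤ (2K)^{2s} · q(x,y)^s for all x, y ∈ X; that is, q^s is bilipschitz equivalent to a metric with bilipschitz constant C = (2K)^{2s}. -/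
open Finset

theorem stmt6 {X : Type*} (K : ℝ) (hK : 1 ≤ K) (q : X → X → ℝ)
    (hq : IsQuasimetric K q) (s : ℝ) (hs : 0 < s)
    (hKs : (2 * K) ^ (2 * s) ≤ 2) :
    ∃ d : X → X → ℝ, IsMetricFun d ∧
      ∀ x y : X, (2 * K) ^ (-(2 * s)) * q x y ^ s ≤ d x y ∧
        d x y ≤ (2 * K) ^ (2 * s) * q x y ^ s := by
  classical
  obtain ⟨hq0, hqe, hqsym, hqt⟩ := hq
  have h2K0 : (0:ℝ) < 2 * K := by linarith
  set A : ℝ := (2 * K) ^ s with hA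
  have hA1 : 1 ≤ A := by
    have := Real.rpow_le_rpow (by norm_num) (by linarith : (1:ℝ) ≤ 2 * K) hs.le
    simpa using this
  have hA0 : 0 < A := lt_of_lt_of_le one_pos hA1
  have hA2eq : A ^ 2 = (2 * K) ^ (2 * s) := by
    rw [hA, ← Real.rpow_natCast ((2*K)^s) 2, ← Real.rpow_mul h2K0.le]
    norm_num [mul_comm]
  have hA2 : A ^ 2 ≤ 2 := hA2eq ▸ hKs
  have hAle2 : A ≤ 2 := by nlinarith
  set ρ : X → X → ℝ := fun x y => q x y ^ s with hρ
  have hρ0 : ∀ x y, 0 ≤ ρ x y := fun x y => Real.rpow_nonneg (hq0 x y) s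
  have hρe : ∀ x y, ρ x y = 0 ↔ x = y := by
    intro x y
    rw [hρ]
    simp only
    rw [Real.rpow_eq_zero (hq0 x y) hs.ne']
    exact hqe x y
  have hρsym : ∀ x y, ρ x y = ρ y x := by intro x y; simp only [hρ, hqsym x y]
  -- quasi-triangle in max form for ρ
  have hρmax : ∀ x y z, ρ x y ≤ A * max (ρ x z) (ρ z y) := by
    intro x y z
    have h1 : q x y ≤ (2 * K) * max (q x z) (q z y) := by
      have h2 : q x z + q z y ≤ 2 * max (q x z) (q z y) := by
        rcases le_total (q x z) (q z y) with h | h <;> simp [max_eq_right, max_eq_left, h] <;> linarith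
      calc q x y ≤ K * (q x z + q z y) := hqt x y z
        _ ≤ K * (2 * max (q x z) (q z y)) := by
            apply mul_le_mul_of_nonneg_left h2 (by linarith)
        _ = (2 * K) * max (q x z) (q z y) := by ring
    have hmax0 : 0 ≤ max (q x z) (q z y) := le_max_of_le_left (hq0 x z)
    have h3 : ρ x y ≤ ((2 * K) * max (q x z) (q z y)) ^ s :=
      Real.rpow_le_rpow (hq0 x y) h1 hs.le
    rw [Real.mul_rpow h2K0.le hmax0] at h3
    have h4 : (max (q x z) (q z y)) ^ s = max (ρ x z) (ρ z y) := by
      rcases le_total (q x z) (q z y) with h | h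
      · rw [max_eq_right h, max_eq_right (Real.rpow_le_rpow (hq0 x z) h hs.le)]
      · rw [max_eq_left h, max_eq_left (Real.rpow_le_rpow (hq0 z y) h hs.le)]
    rw [h4] at h3
    exact h3
  -- key chain lemma
  have key : ∀ n : ℕ, ∀ p : ℕ → X,
      ρ (p 0) (p n) ≤ A ^ 2 * ∑ i ∈ range n, ρ (p i) (p (i + 1)) := by
    intro n
    induction n using Nat.strong_induction_on with
    | _ n ih =>
      intro p
      match n with
      | 0 => simp [(hρe (p 0) (p 0)).mpr rfl]
      | Nat.succ n' =>
        set n := n' + 1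
        set S := ∑ i ∈ range n, ρ (p i) (p (i + 1)) with hSdef
        have hS0 : 0 ≤ S := Finset.sum_nonneg fun i _ => hρ0 _ _
        rcases eq_or_lt_of_le hS0 with hS | hS
        · -- all terms zero: all points equal
          have hterm : ∀ i ∈ range n, ρ (p i) (p (i + 1)) = 0 :=
            (Finset.sum_eq_zero_iff_of_nonneg fun i _ => hρ0 _ _).mp hS.symm
          have hp : ∀ i, i ≤ n → p i = p 0 := by
            intro i
            induction i with
            | zero => intro _; rfl
            | succ j ihj =>
              intro hj
              have h1 : p j = p (j + 1) :=
                (hρe (p j) (p (j+1))).mp (hterm j (mem_range.mpr (by omega)))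
              rw [← h1]; exact ihj (by omega)
          rw [hp n le_rfl, (hρe (p 0) (p 0)).mpr rfl, ← hS]
          simp
        · -- S > 0 : split the chain
          set P : ℕ → Prop := fun k => ∑ i ∈ range k, ρ (p i) (p (i + 1)) ≤ S / 2 with hPdef
          have hP0 : P 0 := by simp [hPdef]; linarith
          set m := Nat.findGreatest P n with hm
          have hm_le : m ≤ n := Nat.findGreatest_le n
          have hPm : P m := Nat.findGreatest_spec (Nat.zero_le n) hP0
          have hmn : m < n := by
            rcases lt_or_eq_of_le hm_le with h | h
            · exact h
            · exfalso; rw [h] at hPm; simp only [hPdef, ← hSdef] at hPm; linarith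
          have hPm1 : ¬ P (m + 1) :=
            Nat.findGreatest_is_greatest (Nat.lt_succ_self m) hmn
          have hPm1' : S / 2 < ∑ i ∈ range (m + 1), ρ (p i) (p (i + 1)) := by
            simpa [hPdef] using not_le.mp hPm1
          -- tail sum
          set T := ∑ i ∈ range (n - (m + 1)), ρ (p (m + 1 + i)) (p (m + 1 + i + 1)) with hT
          have hmn' : m < n' + 1 := hmn
          have hsplit : S = ∑ i ∈ range (m + 1), ρ (p i) (p (i + 1)) + T := by
            rw [hSdef, hT, ← Finset.sum_range_add (fun i => ρ (p i) (p (i+1))) (m+1) (n - (m+1))]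
            have h9 : m + 1 + (n - (m + 1)) = n := Nat.add_sub_cancel' hmn
            rw [h9]
          have hThalf : T ≤ S / 2 := by linarith
          -- IH on initial segment
          have h1 : ρ (p 0) (p m) ≤ A ^ 2 * (S / 2) := by
            calc ρ (p 0) (p m) ≤ A ^ 2 * ∑ i ∈ range m, ρ (p i) (p (i + 1)) := ih m (by omega) p
              _ ≤ A ^ 2 * (S / 2) := by
                  apply mul_le_mul_of_nonneg_left _ (by positivity)
                  simpa [hPdef] using hPm
          -- IH on final segment
          have h2 : ρ (p (m + 1)) (p n) ≤ A ^ 2 * (S / 2) := by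
            have := ih (n - (m + 1)) (by omega) (fun i => p (m + 1 + i))
            rw [show m + 1 + (n - (m + 1)) = n by omega] at this
            calc ρ (p (m + 1)) (p n) ≤ A ^ 2 * T := by simpa [hT, add_assoc] using this
              _ ≤ A ^ 2 * (S / 2) := mul_le_mul_of_nonneg_left hThalf (by positivity)
          -- middle edge ≤ S
          have h3 : ρ (p m) (p (m + 1)) ≤ S := by
            rw [hSdef]
            exact Finset.single_le_sum (f := fun i => ρ (p i) (p (i + 1)))
              (fun i _ => hρ0 _ _) (mem_range.mpr hmn)
          -- assemble
          have hin : ρ (p m) (p n) ≤ A * S := by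
            calc ρ (p m) (p n) ≤ A * max (ρ (p m) (p (m+1))) (ρ (p (m+1)) (p n)) :=
                  hρmax _ _ _
              _ ≤ A * S := by
                  apply mul_le_mul_of_nonneg_left _ hA0.le
                  apply max_le h3
                  nlinarith
          calc ρ (p 0) (p n) ≤ A * max (ρ (p 0) (p m)) (ρ (p m) (p n)) := hρmax _ _ _
            _ ≤ A * (A * S) := by
                apply mul_le_mul_of_nonneg_left _ hA0.le
                apply max_le _ hin
                nlinarith
            _ = A ^ 2 * S := by ring
  -- the set of chain sums
  set C : X → X → Set ℝ := fun x y =>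
    {c | ∃ n : ℕ, ∃ p : ℕ → X, p 0 = x ∧ p n = y ∧
      c = ∑ i ∈ range n, ρ (p i) (p (i + 1))} with hC
  have hmemρ : ∀ x y, ρ x y ∈ C x y := by
    intro x y
    refine ⟨1, fun i => if i = 0 then x else y, by simp, by simp, by simp⟩
  have hne : ∀ x y, (C x y).Nonempty := fun x y => ⟨ρ x y, hmemρ x y⟩
  have hlb : ∀ x y, ∀ c ∈ C x y, (A ^ 2)⁻¹ * ρ x y ≤ c := by
    rintro x y c ⟨n, p, h0, hn, rfl⟩
    have := key n p
    rw [h0, hn] at this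
    rw [inv_mul_le_iff₀ (by positivity)]
    linarith
  have hbdd : ∀ x y, BddBelow (C x y) := fun x y => ⟨(A ^ 2)⁻¹ * ρ x y, hlb x y⟩
  set d : X → X → ℝ := fun x y => sInf (C x y) with hd
  have hdle : ∀ x y, d x y ≤ ρ x y := fun x y => csInf_le (hbdd x y) (hmemρ x y)
  have hdge : ∀ x y, (A ^ 2)⁻¹ * ρ x y ≤ d x y := fun x y =>
    le_csInf (hne x y) (hlb x y)
  have hd0 : ∀ x y, 0 ≤ d x y := by
    intro x y
    have := hdge x y
    have h1 : 0 ≤ (A ^ 2)⁻¹ * ρ x y := mul_nonneg (by positivity) (hρ0 x y)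
    linarith
  -- symmetry
  have hCsymm : ∀ x y, C x y ⊆ C y x := by
    rintro x y c ⟨n, p, h0, hn, rfl⟩
    refine ⟨n, fun i => p (n - i), by simpa using hn, by simpa using h0, ?_⟩
    rw [← Finset.sum_range_reflect (fun j => ρ (p j) (p (j + 1))) n]
    apply Finset.sum_congr rfl
    intro i hi
    rw [mem_range] at hi
    simp only
    rw [show n - 1 - i + 1 = n - i by omega, show n - (i + 1) = n - 1 - i by omega]
    exact hρsym _ _
  have hdsymm : ∀ x y, d x y = d y x := by
    intro x y
    have : C x y = C y x := Set.Subset.antisymm (hCsymm x y) (hCsymm y x)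
    rw [hd]; simp only [this]
  -- triangle
  have hdtri : ∀ x y z, d x y ≤ d x z + d z y := by
    intro x y z
    have hcat : ∀ c₁ ∈ C x z, ∀ c₂ ∈ C z y, d x y ≤ c₁ + c₂ := by
      rintro c₁ ⟨n, p, h0, hn, rfl⟩ c₂ ⟨n', p', h0', hn', rfl⟩
      apply csInf_le (hbdd x y)
      refine ⟨n + n', fun i => if i ≤ n then p i else p' (i - n), ?_, ?_, ?_⟩
      · simp [h0]
      · by_cases h : n' = 0
        · subst h; simp [hn, ← h0', hn']
        · simp only
          rw [if_neg (show ¬ n + n' ≤ n by omega)]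
          rw [show n + n' - n = n' by omega, hn']
      · rw [Finset.sum_range_add]
        congr 1
        · apply Finset.sum_congr rfl
          intro i hi
          rw [mem_range] at hi
          simp only
          rw [if_pos (show i ≤ n by omega), if_pos (show i + 1 ≤ n by omega)]
        · apply Finset.sum_congr rfl
          intro i hi
          rw [mem_range] at hi
          rcases Nat.eq_zero_or_pos i with h | h
          · subst h
            simp only [Nat.add_zero]
            rw [if_pos le_rfl, if_neg (show ¬ n + 1 ≤ n by omega),
              show n + 1 - n = 1 by omega, hn, ← h0']
          · simp only
            rw [if_neg (show ¬ n + i ≤ n by omega), if_neg (show ¬ n + i + 1 ≤ n by omega),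
              show n + i - n = i by omega, show n + i + 1 - n = i + 1 by omega]
    -- now conclude
    have h1 : ∀ c₂ ∈ C z y, d x y ≤ d x z + c₂ := by
      intro c₂ hc₂
      have h2 : d x y - c₂ ≤ d x z := le_csInf (hne x z) fun c₁ hc₁ => by
        have := hcat c₁ hc₁ c₂ hc₂; linarith
      linarith
    have h3 : d x y - d x z ≤ d z y := le_csInf (hne z y) fun c₂ hc₂ => by
      have := h1 c₂ hc₂; linarith
    linarith
  -- d x y = 0 ↔ x = y
  have hdeq : ∀ x y, d x y = 0 ↔ x = y := by
    intro x y
    constructor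
    · intro h
      have := hdge x y
      rw [h] at this
      have hρ0' : ρ x y ≤ 0 := by
        have hA2pos : 0 < (A ^ 2)⁻¹ := by positivity
        nlinarith
      exact (hρe x y).mp (le_antisymm hρ0' (hρ0 x y))
    · rintro rfl
      have h1 := hdle x x
      rw [(hρe x x).mpr rfl] at h1
      exact le_antisymm h1 (hd0 x x)
  refine ⟨d, ⟨hd0, hdeq, hdsymm, hdtri⟩, ?_⟩
  intro x y
  constructor
  · have : (2 * K) ^ (-(2 * s)) = (A ^ 2)⁻¹ := by
      rw [Real.rpow_neg h2K0.le, hA2eq]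
    rw [this]
    exact hdge x y
  · calc d x y ≤ ρ x y := hdle x y
      _ ≤ (2 * K) ^ (2 * s) * q x y ^ s := by
          rw [← hA2eq]
          have heq : ρ x y = q x y ^ s := rfl
          rw [← heq]
          have hA2ge1 : 1 ≤ A ^ 2 := by nlinarith
          nlinarith [hρ0 x y, hA2ge1]
end

section
/- Let (X,d,μ) be a metric measure space that is Ahlfors α-regular with constant C₀ ≥ 1, where α > 0, and let s = 1/α. Then for all x, y ∈ X one has C₀^{−s} · d(x,y) ≤ q_{μ,s}(x,y) ≤ (2C₀)^s · d(x,y); in particular the quasimetric q_{μ,s} is bilipschitz equivalent to the original metric d. -/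
open MeasureTheory Metric

/-- `(X,d,μ)` is Ahlfors `α`-regular with constant `C₀`:
`(1/C₀)·R^α ≤ μ(B[x,R]) ≤ C₀·R^α` for all `x` and all `0 < R ≤ diam X`. -/
def AhlforsRegular {X : Type*} [MetricSpace X] [MeasurableSpace X]
    (μ : Measure X) (α C₀ : ℝ) : Prop :=
  ∀ (x : X) (R : ℝ), 0 < R → ENNReal.ofReal R ≤ EMetric.diam (Set.univ : Set X) →
    ENNReal.ofReal (R ^ α / C₀) ≤ μ (closedBall x R) ∧
      μ (closedBall x R) ≤ ENNReal.ofReal (C₀ * R ^ α)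

open Classical in
/-- The quasimetric `q_{μ,s}` associated to a metric measure space. -/
noncomputable def qms {X : Type*} [MetricSpace X] [MeasurableSpace X]
    (μ : Measure X) (s : ℝ) (x y : X) : ℝ :=
  if x = y then 0
  else ((μ (closedBall x (dist x y)) + μ (closedBall y (dist x y))).toReal) ^ s

theorem stmt7 {X : Type*} [MetricSpace X] [MeasurableSpace X] [BorelSpace X]
    (μ : Measure X) (α C₀ : ℝ) (hα : 0 < α) (hC₀ : 1 ≤ C₀)
    (hreg : AhlforsRegular μ α C₀) :
    ∀ x y : X,
      C₀ ^ (-(1 / α)) * dist x y ≤ qms μ (1 / α) x y ∧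
        qms μ (1 / α) x y ≤ (2 * C₀) ^ (1 / α) * dist x y := by
  intro x y
  by_cases hxy : x = y
  · subst hxy; simp [qms]
  have hR : 0 < dist x y := dist_pos.mpr hxy
  set R := dist x y with hRdef
  have hdiam : ENNReal.ofReal R ≤ EMetric.diam (Set.univ : Set X) := by
    rw [← edist_dist]
    exact EMetric.edist_le_diam_of_mem (Set.mem_univ _) (Set.mem_univ _)
  obtain ⟨h1l, h1u⟩ := hreg x R hR hdiam
  obtain ⟨h2l, h2u⟩ := hreg y R hR hdiam
  have hC₀pos : (0:ℝ) < C₀ := lt_of_lt_of_le one_pos hC₀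
  have hRα : 0 < R ^ α := Real.rpow_pos_of_pos hR α
  set M := μ (closedBall x R) + μ (closedBall y R) with hM
  have hMu : M ≤ ENNReal.ofReal (2 * C₀ * R ^ α) := by
    calc M ≤ ENNReal.ofReal (C₀ * R ^ α) + ENNReal.ofReal (C₀ * R ^ α) :=
          add_le_add h1u h2u
      _ = ENNReal.ofReal (2 * C₀ * R ^ α) := by
          rw [← ENNReal.ofReal_add (by positivity) (by positivity)]; ring_nf
  have hMne : M ≠ ⊤ := ne_top_of_le_ne_top ENNReal.ofReal_ne_top hMu
  have hMl : ENNReal.ofReal (R ^ α / C₀) ≤ M := le_trans h1l le_self_add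
  have htl : R ^ α / C₀ ≤ M.toReal :=
    (ENNReal.ofReal_le_iff_le_toReal hMne).mp hMl
  have htu : M.toReal ≤ 2 * C₀ * R ^ α :=
    ENNReal.toReal_le_of_le_ofReal (by positivity) hMu
  have hq : qms μ (1 / α) x y = M.toReal ^ (1 / α) := by
    simp [qms, hxy, hM]; rfl
  have hs0 : (0:ℝ) ≤ 1 / α := by positivity
  have hEα : (R ^ α) ^ (1 / α) = R := by
    rw [← Real.rpow_mul hR.le, mul_one_div, div_self hα.ne', Real.rpow_one]
  constructor
  · have h1 : (R ^ α / C₀) ^ (1 / α) ≤ M.toReal ^ (1 / α) :=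
      Real.rpow_le_rpow (by positivity) htl hs0
    calc C₀ ^ (-(1 / α)) * R = (R ^ α / C₀) ^ (1 / α) := by
          rw [Real.div_rpow hRα.le hC₀pos.le, hEα, Real.rpow_neg hC₀pos.le,
            div_eq_mul_inv, mul_comm, ← div_eq_mul_inv]
      _ ≤ M.toReal ^ (1 / α) := h1
      _ = qms μ (1 / α) x y := hq.symm
  · have h2 : M.toReal ^ (1 / α) ≤ (2 * C₀ * R ^ α) ^ (1 / α) :=
      Real.rpow_le_rpow ENNReal.toReal_nonneg htu hs0
    calc qms μ (1 / α) x y = M.toReal ^ (1 / α) := hq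
      _ ≤ (2 * C₀ * R ^ α) ^ (1 / α) := h2
      _ = (2 * C₀) ^ (1 / α) * R := by
          rw [Real.mul_rpow (by positivity) hRα.le, hEα]
end

section
/- Let (X,d) be a metric space containing at least two points that is uniformly perfect with constant C ≥ 1, and let μ be a doubling measure on X with constant D ≥ 1. Then there exist constants a ∈ (0,1) and θ ∈ (0,1) such that for every x ∈ X, every r with 0 < r ≤ diam X, and every k ∈ ℕ, one has μ(B[x, a^k·r]) ≤ θ^k · μ(B[x,r]). -/
open MeasureTheory Metric

/-- `(X,d)` is uniformly perfect with constant `C`. -/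
def UniformlyPerfect (X : Type*) [MetricSpace X] (C : ℝ) : Prop :=
  ∀ (x : X) (r : ℝ), 0 < r → ENNReal.ofReal r ≤ EMetric.diam (Set.univ : Set X) →
    ∃ y : X, r / C ≤ dist x y ∧ dist x y ≤ r

/-- `μ` is a doubling measure with constant `D` on the metric space `X`. -/
def IsDoublingMeasure {X : Type*} [MetricSpace X] [MeasurableSpace X]
    (μ : Measure X) (D : ℝ) : Prop :=
  (∀ (x : X) (r : ℝ), 0 < r → 0 < μ (closedBall x r) ∧ μ (closedBall x r) < ⊤) ∧
    ∀ (x : X) (r : ℝ), 0 < r →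
      μ (closedBall x (2 * r)) ≤ ENNReal.ofReal D * μ (closedBall x r)

theorem stmt9 {X : Type*} [MetricSpace X] [Nontrivial X]
    [MeasurableSpace X] [BorelSpace X]
    (C : ℝ) (hC : 1 ≤ C) (hup : UniformlyPerfect X C)
    (μ : Measure X) (D : ℝ) (hD : 1 ≤ D) (hμ : IsDoublingMeasure μ D) :
    ∃ a : ℝ, a ∈ Set.Ioo (0:ℝ) 1 ∧ ∃ θ : ℝ, θ ∈ Set.Ioo (0:ℝ) 1 ∧
      ∀ (x : X) (r : ℝ), 0 < r → ENNReal.ofReal r ≤ EMetric.diam (Set.univ : Set X) →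
        ∀ k : ℕ,
          μ (closedBall x (a ^ k * r)) ≤ ENNReal.ofReal (θ ^ k) * μ (closedBall x r) := by
  obtain ⟨hfin, hdbl⟩ := hμ
  have hC0 : (0:ℝ) < C := by linarith
  set E : ℝ := 2 * D with hEdef
  have hE2 : (2:ℝ) ≤ E := by nlinarith
  have hE0 : (0:ℝ) < E := by linarith
  have hdbl' : ∀ (x : X) (r : ℝ), 0 < r →
      μ (closedBall x (2 * r)) ≤ ENNReal.ofReal E * μ (closedBall x r) := by
    intro x r hr
    exact (hdbl x r hr).trans
      (mul_le_mul_left (ENNReal.ofReal_le_ofReal (by linarith)) _)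
  -- iterated doubling
  have hiter : ∀ (m : ℕ) (x : X) (s : ℝ), 0 < s →
      μ (closedBall x (2 ^ m * s)) ≤ ENNReal.ofReal E ^ m * μ (closedBall x s) := by
    intro m
    induction m with
    | zero => intro x s hs; simp
    | succ m ih =>
      intro x s hs
      have h1 : (2:ℝ) ^ (m+1) * s = 2 * (2 ^ m * s) := by ring
      rw [h1, pow_succ]
      calc μ (closedBall x (2 * (2 ^ m * s)))
          ≤ ENNReal.ofReal E * μ (closedBall x (2 ^ m * s)) :=
            hdbl' x _ (by positivity)
        _ ≤ ENNReal.ofReal E * (ENNReal.ofReal E ^ m * μ (closedBall x s)) :=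
            mul_le_mul_right (ih x s hs) _
        _ = ENNReal.ofReal E ^ m * ENNReal.ofReal E * μ (closedBall x s) := by ring
  -- choose m with 12*C ≤ 2^m
  set m : ℕ := ⌈C⌉₊ + 4 with hmdef
  have hm : 12 * C ≤ 2 ^ m := by
    have h1 : C ≤ (⌈C⌉₊ : ℝ) := Nat.le_ceil C
    have h2 : (⌈C⌉₊ : ℝ) ≤ 2 ^ (⌈C⌉₊ : ℕ) := by
      exact_mod_cast (Nat.lt_two_pow_self (n := ⌈C⌉₊)).le
    have h3 : (2:ℝ) ^ m = 16 * 2 ^ (⌈C⌉₊ : ℕ) := by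
      rw [hmdef, pow_add]; ring
    nlinarith [pow_pos (by norm_num : (0:ℝ) < 2) (⌈C⌉₊ : ℕ)]
  set a : ℝ := 1 / (4 * C) with hadef
  have ha0 : 0 < a := by positivity
  have ha1 : a < 1 := by
    rw [hadef, div_lt_one (by linarith)]; linarith
  set ε : ℝ := (1 / E) ^ m with hεdef
  have hε0 : 0 < ε := by positivity
  have hε1 : ε < 1 := by
    apply pow_lt_one₀ (by positivity) _ (by omega)
    rw [div_lt_one hE0]; linarith
  set θ : ℝ := 1 - ε with hθdef
  have hθ0 : 0 < θ := by simp [hθdef]; linarith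
  have hθ1 : θ < 1 := by simp [hθdef]; linarith
  -- key one-step estimate
  have key : ∀ (x : X) (s : ℝ), 0 < s →
      ENNReal.ofReal s ≤ EMetric.diam (Set.univ : Set X) →
      μ (closedBall x (a * s)) ≤ ENNReal.ofReal θ * μ (closedBall x s) := by
    intro x s hs hsd
    obtain ⟨y, hy1, hy2⟩ := hup x (s/2) (by positivity)
      (le_trans (ENNReal.ofReal_le_ofReal (by linarith)) hsd)
    have hy1' : s / (2 * C) ≤ dist x y := by
      have : s / 2 / C = s / (2 * C) := by field_simp
      linarith [this ▸ hy1]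
    set ρ : ℝ := s / (8 * C) with hρdef
    have hρ0 : 0 < ρ := by positivity
    -- B[y,ρ] ⊆ B[x,s]
    have hsub : closedBall y ρ ⊆ closedBall x s := by
      intro z hz
      simp only [mem_closedBall] at hz ⊢
      have htri : dist z x ≤ dist z y + dist y x := dist_triangle z y x
      have h8 : ρ ≤ s / 8 := by
        rw [hρdef, div_le_div_iff₀ (by positivity) (by norm_num)]
        nlinarith
      have hc1 : dist y x = dist x y := dist_comm y x
      have hc2 : dist z y = dist y z := dist_comm z y
      linarith
    -- disjointness
    have hdisj : Disjoint (closedBall x (a * s)) (closedBall y ρ) := by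
      rw [Set.disjoint_left]
      intro z hz1 hz2
      simp only [mem_closedBall] at hz1 hz2
      have htri : dist x y ≤ dist x z + dist z y := dist_triangle x z y
      have h1 : dist z x = dist x z := dist_comm z x
      have has : a * s = s / (4 * C) := by rw [hadef]; ring
      have hlt : s / (4 * C) + s / (8 * C) < s / (2 * C) := by
        rw [div_add_div _ _ (by positivity) (by positivity),
          div_lt_div_iff₀ (by positivity) (by positivity)]
        nlinarith [mul_pos (mul_pos hC0 hC0) hs]
      linarith
    -- covering: B[x,s] ⊆ B[y, 2^m * ρ]
    have hcov : closedBall x s ⊆ closedBall y (2 ^ m * ρ) := by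
      intro z hz
      simp only [mem_closedBall] at hz ⊢
      have htri : dist z y ≤ dist z x + dist x y := dist_triangle z x y
      have h2 : (3:ℝ)/2 * s ≤ 2 ^ m * ρ := by
        have he : (2:ℝ) ^ m * ρ = (2 ^ m * s) / (8 * C) := by rw [hρdef]; ring
        rw [he, le_div_iff₀ (by positivity)]
        nlinarith [mul_le_mul_of_nonneg_right hm hs.le]
      linarith
    set T := μ (closedBall x s) with hT
    have hTfin : T ≠ ⊤ := (hfin x s hs).2.ne
    -- lower bound for μ(B[y,ρ])
    have hlow : ENNReal.ofReal ε * T ≤ μ (closedBall y ρ) := by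
      have h1 : T ≤ ENNReal.ofReal E ^ m * μ (closedBall y ρ) :=
        (measure_mono hcov).trans (hiter m y ρ hρ0)
      have hunit : ENNReal.ofReal ε * ENNReal.ofReal E ^ m = 1 := by
        rw [← ENNReal.ofReal_pow hE0.le, ← ENNReal.ofReal_mul hε0.le]
        have : ε * E ^ m = 1 := by
          rw [hεdef, ← mul_pow, one_div_mul_cancel hE0.ne', one_pow]
        rw [this, ENNReal.ofReal_one]
      calc ENNReal.ofReal ε * T ≤ ENNReal.ofReal ε * (ENNReal.ofReal E ^ m * μ (closedBall y ρ)) :=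
            mul_le_mul_right h1 _
        _ = (ENNReal.ofReal ε * ENNReal.ofReal E ^ m) * μ (closedBall y ρ) := by ring
        _ = μ (closedBall y ρ) := by rw [hunit, one_mul]
    -- disjoint sum
    have hsum : μ (closedBall x (a * s)) + μ (closedBall y ρ) ≤ T := by
      rw [← measure_union hdisj measurableSet_closedBall]
      apply measure_mono
      apply Set.union_subset _ hsub
      apply closedBall_subset_closedBall
      nlinarith
    have hsplit : T = ENNReal.ofReal θ * T + ENNReal.ofReal ε * T := by
      rw [← add_mul, ← ENNReal.ofReal_add (by linarith) hε0.le]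
      rw [show θ + ε = 1 by rw [hθdef]; ring, ENNReal.ofReal_one, one_mul]
    have hne : ENNReal.ofReal ε * T ≠ ⊤ := ENNReal.mul_ne_top ENNReal.ofReal_ne_top hTfin
    have hfinal : μ (closedBall x (a * s)) + ENNReal.ofReal ε * T
        ≤ ENNReal.ofReal θ * T + ENNReal.ofReal ε * T := by
      calc μ (closedBall x (a * s)) + ENNReal.ofReal ε * T
          ≤ μ (closedBall x (a * s)) + μ (closedBall y ρ) := add_le_add_right hlow _
        _ ≤ T := hsum
        _ = ENNReal.ofReal θ * T + ENNReal.ofReal ε * T := hsplit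
    exact (ENNReal.add_le_add_iff_right hne).mp hfinal
  refine ⟨a, ⟨ha0, ha1⟩, θ, ⟨hθ0, hθ1⟩, ?_⟩
  intro x r hr hrd k
  induction k with
  | zero => simp
  | succ k ih =>
    have hak : 0 < a ^ k * r := by positivity
    have hle : a ^ k * r ≤ r := by
      have h1 : a ^ k ≤ 1 := pow_le_one₀ ha0.le ha1.le
      nlinarith
    have hstep : μ (closedBall x (a ^ (k+1) * r)) ≤
        ENNReal.ofReal θ * μ (closedBall x (a ^ k * r)) := by
      rw [show a ^ (k+1) * r = a * (a ^ k * r) by ring]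
      exact key x _ hak (le_trans (ENNReal.ofReal_le_ofReal hle) hrd)
    calc μ (closedBall x (a ^ (k+1) * r))
        ≤ ENNReal.ofReal θ * μ (closedBall x (a ^ k * r)) := hstep
      _ ≤ ENNReal.ofReal θ * (ENNReal.ofReal (θ ^ k) * μ (closedBall x r)) :=
          mul_le_mul_right ih _
      _ = ENNReal.ofReal (θ ^ (k+1)) * μ (closedBall x r) := by
          rw [← mul_assoc, ← ENNReal.ofReal_mul hθ0.le, ← pow_succ']
end

section
/- Let (X,d) be a metric space containing at least two points that is uniformly perfect with constant C ≥ 1, let μ be a doubling measure on X with constant D ≥ 1, and let s > 0. Then there exists a constant C₄ ≥ 1 such that for every x ∈ X and every ρ > 0 for which the quasimetric ball β[x,ρ] = {y ∈ X : q_{μ,s}(x,y) ≤ ρ} is not all of X, one has (1/C₄) · ρ^{1/s} ≤ μ(β[x,ρ]) ≤ C₄ · ρ^{1/s}. In other words, μ is Ahlfors (1/s)-regular with respect to the quasimetric q_{μ,s}. -/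
open MeasureTheory Metric

lemma doubling_pow {X : Type*} [MetricSpace X] [MeasurableSpace X] {μ : Measure X} {D : ℝ}
    (hμ : ∀ (x : X) (r : ℝ), 0 < r →
      μ (closedBall x (2 * r)) ≤ ENNReal.ofReal D * μ (closedBall x r))
    (x : X) (r : ℝ) (hr : 0 < r) (k : ℕ) :
    μ (closedBall x (2 ^ k * r)) ≤ (ENNReal.ofReal D) ^ k * μ (closedBall x r) := by
  induction k with
  | zero => simp
  | succ n ih =>
    have h2 : (2:ℝ) ^ (n+1) * r = 2 * (2 ^ n * r) := by ring
    rw [h2]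
    calc μ (closedBall x (2 * (2 ^ n * r)))
        ≤ ENNReal.ofReal D * μ (closedBall x (2 ^ n * r)) := hμ x _ (by positivity)
      _ ≤ ENNReal.ofReal D * ((ENNReal.ofReal D) ^ n * μ (closedBall x r)) := by gcongr
      _ = (ENNReal.ofReal D) ^ (n+1) * μ (closedBall x r) := by ring

lemma no_atom {X : Type*} [MetricSpace X] [Nontrivial X]
    [MeasurableSpace X] [BorelSpace X]
    (C : ℝ) (hC : 1 ≤ C) (hup : UniformlyPerfect X C)
    (μ : Measure X) (D : ℝ) (hD : 1 ≤ D) (hμ : IsDoublingMeasure μ D)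
    (x : X) : μ {x} = 0 := by
  obtain ⟨a, b, hab⟩ := exists_pair_ne X
  have hr₀ : 0 < dist a b := dist_pos.2 hab
  set r₀ : ℝ := dist a b with hr₀def
  have hdiam : ENNReal.ofReal r₀ ≤ EMetric.diam (Set.univ : Set X) := by
    rw [hr₀def, ← edist_dist]
    exact EMetric.edist_le_diam_of_mem trivial trivial
  obtain ⟨m, hm⟩ := pow_unbounded_of_one_lt (R := ℝ) (4 * C) one_lt_two
  set D' := ENNReal.ofReal D with hD'
  have hD'top : D' ^ m ≠ ⊤ := by
    simp [hD']
  have hxfin : μ {x} ≠ ⊤ := by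
    have h1 := (hμ.1 x 1 one_pos).2
    exact (lt_of_le_of_lt (measure_mono (by simp)) h1).ne
  have hC0 : (0:ℝ) < C := lt_of_lt_of_le one_pos hC
  -- key estimate
  have key : ∀ r : ℝ, 0 < r → ENNReal.ofReal r ≤ EMetric.diam (Set.univ : Set X) →
      μ {x} + μ {x} / D' ^ m ≤ μ (closedBall x (2 * r)) := by
    intro r hr hrd
    obtain ⟨y, hy1, hy2⟩ := hup x r hr hrd
    have hδ : 0 < r / (4 * C) := by positivity
    set δ : ℝ := r / (4 * C) with hδdef
    have hδr : δ ≤ r := by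
      rw [hδdef, div_le_iff₀ (by positivity)]
      nlinarith
    have hdisj : Disjoint (closedBall x δ) (closedBall y δ) := by
      apply Set.disjoint_left.2
      intro z hz1 hz2
      simp only [mem_closedBall] at hz1 hz2
      have hxy : dist x y ≤ 2 * δ := by
        calc dist x y ≤ dist x z + dist z y := dist_triangle x z y
          _ = dist z x + dist z y := by rw [dist_comm]
          _ ≤ δ + δ := add_le_add hz1 hz2
          _ = 2 * δ := by ring
      have h2δ : 2 * δ < r / C := by
        have he : 2 * δ = r / (2 * C) := by rw [hδdef]; ring
        rw [he, div_lt_div_iff₀ (by positivity) hC0]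
        nlinarith
      linarith
    have hsub : closedBall x δ ∪ closedBall y δ ⊆ closedBall x (2 * r) := by
      apply Set.union_subset
      · exact closedBall_subset_closedBall (by linarith)
      · intro z hz
        simp only [mem_closedBall] at hz ⊢
        calc dist z x ≤ dist z y + dist y x := dist_triangle z y x
          _ ≤ δ + r := add_le_add hz (by rw [dist_comm]; exact hy2)
          _ ≤ 2 * r := by linarith
    have hunion : μ (closedBall x δ) + μ (closedBall y δ) ≤ μ (closedBall x (2 * r)) := by
      rw [← measure_union hdisj measurableSet_closedBall]
      exact measure_mono hsub
    have h1 : μ {x} ≤ μ (closedBall x δ) :=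
      measure_mono (by simp [Set.singleton_subset_iff, mem_closedBall, hδ.le])
    have h2 : μ {x} / D' ^ m ≤ μ (closedBall y δ) := by
      apply ENNReal.div_le_of_le_mul'
      have hrm : r ≤ 2 ^ m * δ := by
        rw [hδdef, ← mul_div_assoc, le_div_iff₀ (by positivity)]
        nlinarith
      have hxmem : μ {x} ≤ μ (closedBall y (2 ^ m * δ)) := by
        apply measure_mono
        simp only [Set.singleton_subset_iff, mem_closedBall]
        calc dist x y ≤ r := hy2
          _ ≤ 2 ^ m * δ := hrm
      calc μ {x} ≤ μ (closedBall y (2 ^ m * δ)) := hxmem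
        _ ≤ D' ^ m * μ (closedBall y δ) := doubling_pow hμ.2 y δ hδ m
    calc μ {x} + μ {x} / D' ^ m ≤ μ (closedBall x δ) + μ (closedBall y δ) := add_le_add h1 h2
      _ ≤ μ (closedBall x (2 * r)) := hunion
  -- take limit along r = r₀ / (n+1)
  have hseq : Filter.Tendsto (fun n : ℕ => μ (closedBall x (2 * (r₀ / (n + 1)))))
      Filter.atTop (nhds (μ (⋂ n : ℕ, closedBall x (2 * (r₀ / (n + 1)))))) := by
    apply tendsto_measure_iInter_atTop
    · exact fun n => measurableSet_closedBall.nullMeasurableSet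
    · intro i j hij
      apply closedBall_subset_closedBall
      have hi : (0:ℝ) < (i:ℝ) + 1 := by positivity
      have hij' : ((i:ℝ) + 1) ≤ ((j:ℝ) + 1) := by
        have : (i:ℝ) ≤ (j:ℝ) := by exact_mod_cast hij
        linarith
      gcongr
    · refine ⟨0, ?_⟩
      have hsub0 : closedBall x (2 * (r₀ / ((0:ℕ) + 1))) ⊆ closedBall x (2 * r₀) :=
        closedBall_subset_closedBall (by norm_num)
      exact (lt_of_le_of_lt (measure_mono hsub0) (hμ.1 x (2 * r₀) (by linarith)).2).ne
  have hInter : (⋂ n : ℕ, closedBall x (2 * (r₀ / (n + 1)))) = {x} := by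
    apply Set.Subset.antisymm
    · intro z hz
      simp only [Set.mem_iInter, mem_closedBall] at hz
      simp only [Set.mem_singleton_iff]
      have h0 : Filter.Tendsto (fun n : ℕ => 2 * (r₀ / (n + 1))) Filter.atTop (nhds 0) := by
        have h1 := tendsto_one_div_add_atTop_nhds_zero_nat.const_mul (2 * r₀)
        rw [mul_zero] at h1
        have h2 : (fun n : ℕ => 2 * r₀ * (1 / ((n:ℝ) + 1)))
            = (fun n : ℕ => 2 * (r₀ / ((n:ℝ) + 1))) := by
          funext n; ring
        rwa [h2] at h1
      rw [← dist_le_zero (x := z) (y := x)]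
      exact ge_of_tendsto' h0 hz
    · intro z hz
      simp only [Set.mem_singleton_iff] at hz
      subst hz
      simp only [Set.mem_iInter, mem_closedBall, dist_self]
      intro n; positivity
  rw [hInter] at hseq
  have hle : μ {x} + μ {x} / D' ^ m ≤ μ {x} := by
    refine ge_of_tendsto hseq ?_
    filter_upwards [Filter.eventually_ge_atTop 0] with n _
    refine key _ (by positivity) ?_
    refine le_trans (ENNReal.ofReal_le_ofReal ?_) hdiam
    rw [div_le_iff₀ (by positivity)]
    nlinarith [Nat.cast_nonneg (α := ℝ) n]
  by_contra hne
  have hq : μ {x} / D' ^ m ≠ 0 := by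
    simp only [ne_eq, ENNReal.div_eq_zero_iff, hD'top, or_false]
    exact hne
  exact absurd hle (not_le.2 (ENNReal.lt_add_right hxfin hq))

theorem stmt10 {X : Type*} [MetricSpace X] [Nontrivial X]
    [MeasurableSpace X] [BorelSpace X]
    (C : ℝ) (hC : 1 ≤ C) (hup : UniformlyPerfect X C)
    (μ : Measure X) (D : ℝ) (hD : 1 ≤ D) (hμ : IsDoublingMeasure μ D)
    (s : ℝ) (hs : 0 < s) :
    ∃ C₄ : ℝ, 1 ≤ C₄ ∧
      ∀ (x : X) (ρ : ℝ), 0 < ρ → {y : X | qms μ s x y ≤ ρ} ≠ Set.univ →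
        ENNReal.ofReal (ρ ^ (1 / s) / C₄) ≤ μ {y : X | qms μ s x y ≤ ρ} ∧
          μ {y : X | qms μ s x y ≤ ρ} ≤ ENNReal.ofReal (C₄ * ρ ^ (1 / s)) := by
  have hD0 : (0:ℝ) < D := lt_of_lt_of_le one_pos hD
  set D' := ENNReal.ofReal D with hD'
  have hD'1 : (1:ENNReal) ≤ D' := by
    rw [hD']; exact ENNReal.one_le_ofReal.2 hD
  refine ⟨2 * D ^ 2, by nlinarith, ?_⟩
  intro x ρ hρ hne
  set β := {y : X | qms μ s x y ≤ ρ} with hβ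
  have ht : 0 < ρ ^ (1 / s) := Real.rpow_pos_of_pos hρ _
  have hps : (ρ ^ (1 / s)) ^ s = ρ := by
    rw [← Real.rpow_mul hρ.le, one_div, inv_mul_cancel₀ hs.ne', Real.rpow_one]
  have hT0 : ENNReal.ofReal (ρ ^ (1 / s)) ≠ 0 := by
    simp only [ne_eq, ENNReal.ofReal_eq_zero, not_le]; exact ht
  have hxβ : x ∈ β := by
    simp only [hβ, Set.mem_setOf_eq, qms, if_pos rfl]; exact hρ.le
  -- the key membership criterion
  have key : ∀ y : X, y ≠ x → (y ∈ β ↔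
      μ (closedBall x (dist x y)) + μ (closedBall y (dist x y))
        ≤ ENNReal.ofReal (ρ ^ (1 / s))) := by
    intro y hy
    have hd : 0 < dist x y := dist_pos.2 (Ne.symm hy)
    have hA : μ (closedBall x (dist x y)) + μ (closedBall y (dist x y)) ≠ ⊤ :=
      ENNReal.add_ne_top.2 ⟨(hμ.1 x _ hd).2.ne, (hμ.1 y _ hd).2.ne⟩
    have hmem : y ∈ β ↔
        ((μ (closedBall x (dist x y)) + μ (closedBall y (dist x y))).toReal) ^ s ≤ ρ := by
      simp only [hβ, Set.mem_setOf_eq, qms, if_neg (Ne.symm hy)]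
    rw [hmem]
    rw [ENNReal.le_ofReal_iff_toReal_le hA ht.le]
    constructor
    · intro h
      calc (μ (closedBall x (dist x y)) + μ (closedBall y (dist x y))).toReal
          = (((μ (closedBall x (dist x y)) + μ (closedBall y (dist x y))).toReal) ^ s) ^ (1/s) := by
            rw [← Real.rpow_mul ENNReal.toReal_nonneg, mul_one_div, div_self hs.ne',
              Real.rpow_one]
        _ ≤ ρ ^ (1/s) := Real.rpow_le_rpow (Real.rpow_nonneg ENNReal.toReal_nonneg _) h
            (by positivity)
    · intro h
      calc ((μ (closedBall x (dist x y)) + μ (closedBall y (dist x y))).toReal) ^ s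
          ≤ (ρ ^ (1/s)) ^ s := Real.rpow_le_rpow ENNReal.toReal_nonneg h hs.le
        _ = ρ := hps
  have hconv : D' ^ 2 * ENNReal.ofReal (ρ ^ (1 / s)) ≤ ENNReal.ofReal (2 * D ^ 2 * ρ ^ (1 / s)) := by
    rw [hD', ← ENNReal.ofReal_pow hD0.le, ← ENNReal.ofReal_mul (by positivity)]
    exact ENNReal.ofReal_le_ofReal (by nlinarith)
  constructor
  · -- LOWER BOUND
    have hμx : μ {x} = 0 := no_atom C hC hup μ D hD hμ x
    set S := {r : ℝ | 0 < r ∧ 2 * μ (closedBall x (2 * r)) ≤ ENNReal.ofReal (ρ ^ (1 / s))}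
      with hS
    have hSsub : ∀ r ∈ S, closedBall x r ⊆ β := by
      rintro r ⟨hr, hrS⟩ z hz
      rcases eq_or_ne z x with hzx | hzx
      · rw [hzx]; exact hxβ
      · rw [key z hzx]
        have hd : dist x z ≤ r := by rw [dist_comm]; exact mem_closedBall.1 hz
        have hsub2 : closedBall z (dist x z) ⊆ closedBall x (2 * r) := by
          intro w hw
          simp only [mem_closedBall] at hw ⊢
          have h1 : dist z x ≤ r := mem_closedBall.1 hz
          have h2 : dist w z ≤ r := le_trans hw hd
          calc dist w x ≤ dist w z + dist z x := dist_triangle w z x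
            _ ≤ r + r := add_le_add h2 h1
            _ = 2 * r := by ring
        calc μ (closedBall x (dist x z)) + μ (closedBall z (dist x z))
            ≤ μ (closedBall x (2 * r)) + μ (closedBall x (2 * r)) :=
              add_le_add (measure_mono (closedBall_subset_closedBall (by linarith)))
                (measure_mono hsub2)
          _ = 2 * μ (closedBall x (2 * r)) := (two_mul _).symm
          _ ≤ ENNReal.ofReal (ρ ^ (1 / s)) := hrS
    -- S is nonempty
    have hSne : S.Nonempty := by
      have hseq : Filter.Tendsto (fun n : ℕ => μ (closedBall x (2 * (1 / (n + 1)))))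
          Filter.atTop (nhds (μ (⋂ n : ℕ, closedBall x (2 * (1 / (n + 1)))))) := by
        apply tendsto_measure_iInter_atTop
        · exact fun n => measurableSet_closedBall.nullMeasurableSet
        · intro i j hij
          apply closedBall_subset_closedBall
          have hij' : ((i:ℝ) + 1) ≤ ((j:ℝ) + 1) := by
            have : (i:ℝ) ≤ (j:ℝ) := by exact_mod_cast hij
            linarith
          have h1 : (1:ℝ)/((j:ℝ)+1) ≤ 1/((i:ℝ)+1) :=
            one_div_le_one_div_of_le (by positivity) hij'
          linarith
        · refine ⟨0, ?_⟩
          have h0 : closedBall x (2 * (1 / ((0:ℕ) + 1))) ⊆ closedBall x 2 :=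
            closedBall_subset_closedBall (by norm_num)
          exact (lt_of_le_of_lt (measure_mono h0) (hμ.1 x 2 two_pos).2).ne
      have hI : (⋂ n : ℕ, closedBall x (2 * (1 / (n + 1)))) = {x} := by
        apply Set.Subset.antisymm
        · intro z hz
          simp only [Set.mem_iInter, mem_closedBall] at hz
          simp only [Set.mem_singleton_iff]
          have h0 : Filter.Tendsto (fun n : ℕ => 2 * ((1:ℝ) / (n + 1))) Filter.atTop (nhds 0) := by
            have h1 := tendsto_one_div_add_atTop_nhds_zero_nat.const_mul (2:ℝ)
            rw [mul_zero] at h1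
            exact h1
          rw [← dist_le_zero (x := z) (y := x)]
          exact ge_of_tendsto' h0 hz
        · intro z hz
          simp only [Set.mem_singleton_iff] at hz
          subst hz
          simp only [Set.mem_iInter, mem_closedBall, dist_self]
          intro n; positivity
      rw [hI, hμx] at hseq
      have hhalf : (0:ENNReal) < ENNReal.ofReal (ρ ^ (1 / s)) / 2 :=
        ENNReal.div_pos hT0 (by norm_num)
      obtain ⟨n, hn⟩ := (hseq.eventually_lt_const hhalf).exists
      refine ⟨1 / (n + 1), by positivity, ?_⟩
      calc 2 * μ (closedBall x (2 * (1 / (n + 1))))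
          ≤ 2 * (ENNReal.ofReal (ρ ^ (1 / s)) / 2) := mul_le_mul_right hn.le 2
        _ = ENNReal.ofReal (ρ ^ (1 / s)) := by
            rw [mul_comm]
            exact ENNReal.div_mul_cancel (by norm_num) (by norm_num)
    -- S is bounded above
    have hSbdd : BddAbove S := by
      by_contra hnb
      apply hne
      apply Set.eq_univ_of_forall
      intro z
      obtain ⟨r, hrS, hzr⟩ := not_bddAbove_iff.1 hnb (dist z x)
      exact hSsub r hrS (mem_closedBall.2 hzr.le)
    obtain ⟨r₂, hr₂⟩ := hSne
    have hRpos : 0 < sSup S := lt_of_lt_of_le hr₂.1 (le_csSup hSbdd hr₂)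
    obtain ⟨r, hrS, hrR⟩ := exists_lt_of_lt_csSup ⟨r₂, hr₂⟩
      (show 3 * sSup S / 4 < sSup S by linarith)
    have hnotS : (3 * sSup S / 2) ∉ S := by
      intro hmem
      have := le_csSup hSbdd hmem
      linarith
    have hTlt : ENNReal.ofReal (ρ ^ (1 / s)) < 2 * μ (closedBall x (2 * (3 * sSup S / 2))) := by
      by_contra h
      push_neg at h
      exact hnotS ⟨by linarith, h⟩
    have hchain : ENNReal.ofReal (ρ ^ (1 / s)) ≤ (2 * D' ^ 2) * μ (closedBall x r) := by
      calc ENNReal.ofReal (ρ ^ (1 / s))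
          ≤ 2 * μ (closedBall x (2 * (3 * sSup S / 2))) := hTlt.le
        _ ≤ 2 * μ (closedBall x (2 ^ 2 * r)) :=
            mul_le_mul_right (measure_mono (closedBall_subset_closedBall (by linarith))) 2
        _ ≤ 2 * (D' ^ 2 * μ (closedBall x r)) :=
            mul_le_mul_right (doubling_pow hμ.2 x r hrS.1 2) 2
        _ = (2 * D' ^ 2) * μ (closedBall x r) := by ring
    have hdiv : ENNReal.ofReal (ρ ^ (1 / s)) / (2 * D' ^ 2) ≤ μ (closedBall x r) :=
      ENNReal.div_le_of_le_mul' hchain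
    have heq : ENNReal.ofReal (ρ ^ (1 / s) / (2 * D ^ 2))
        = ENNReal.ofReal (ρ ^ (1 / s)) / (2 * D' ^ 2) := by
      rw [ENNReal.ofReal_div_of_pos (by positivity), ENNReal.ofReal_mul (by norm_num),
        hD', ENNReal.ofReal_pow hD0.le, ENNReal.ofReal_ofNat]
    rw [heq]
    exact le_trans hdiv (le_trans (measure_mono (hSsub r hrS)) (le_refl _))
  · -- UPPER BOUND
    by_cases hcase : ∀ r : ℝ, 0 < r → ∃ y ∈ β, r ≤ dist x y
    · have hball : ∀ r : ℝ, 0 < r → μ (closedBall x r) ≤ ENNReal.ofReal (ρ ^ (1 / s)) := by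
        intro r hr
        obtain ⟨y, hyβ, hyd⟩ := hcase r hr
        have hyx : y ≠ x := by
          intro h
          rw [h, dist_self] at hyd
          linarith
        have hsum := (key y hyx).1 hyβ
        calc μ (closedBall x r) ≤ μ (closedBall x (dist x y)) :=
              measure_mono (closedBall_subset_closedBall hyd)
          _ ≤ μ (closedBall x (dist x y)) + μ (closedBall y (dist x y)) := le_self_add
          _ ≤ ENNReal.ofReal (ρ ^ (1 / s)) := hsum
      have huniv : μ (Set.univ : Set X) ≤ ENNReal.ofReal (ρ ^ (1 / s)) := by
        have hU : (⋃ n : ℕ, closedBall x (n + 1)) = Set.univ := by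
          apply Set.eq_univ_of_forall
          intro z
          obtain ⟨n, hn⟩ := exists_nat_ge (dist z x)
          exact Set.mem_iUnion.2 ⟨n, mem_closedBall.2 (by linarith)⟩
        have hmono : Monotone (fun n : ℕ => closedBall x ((n:ℝ) + 1)) := by
          intro i j hij
          apply closedBall_subset_closedBall
          have : (i:ℝ) ≤ (j:ℝ) := by exact_mod_cast hij
          linarith
        have htend := tendsto_measure_iUnion_atTop (μ := μ) hmono
        rw [hU] at htend
        exact le_of_tendsto' htend fun n => hball _ (by positivity)
      calc μ β ≤ μ (Set.univ : Set X) := measure_mono (Set.subset_univ _)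
        _ ≤ ENNReal.ofReal (ρ ^ (1 / s)) := huniv
        _ ≤ D' ^ 2 * ENNReal.ofReal (ρ ^ (1 / s)) := by
            nth_rewrite 1 [← one_mul (ENNReal.ofReal (ρ ^ (1 / s)))]
            gcongr
            calc (1:ENNReal) = 1 ^ 2 := (one_pow 2).symm
              _ ≤ D' ^ 2 := by gcongr
        _ ≤ ENNReal.ofReal (2 * D ^ 2 * ρ ^ (1 / s)) := hconv
    · push_neg at hcase
      obtain ⟨r₁, hr₁, hbd⟩ := hcase
      have hAne : ((fun y => dist x y) '' β).Nonempty := ⟨0, x, hxβ, dist_self x⟩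
      have hAbdd : BddAbove ((fun y => dist x y) '' β) := by
        refine ⟨r₁, ?_⟩
        rintro _ ⟨y, hy, rfl⟩
        exact (hbd y hy).le
      have hR0 : 0 ≤ sSup ((fun y => dist x y) '' β) := by
        exact le_csSup hAbdd ⟨x, hxβ, dist_self x⟩
      rcases eq_or_lt_of_le hR0 with hR | hR
      · -- all of β equals {x}
        have hβx : β ⊆ {x} := by
          intro z hz
          have := le_csSup hAbdd ⟨z, hz, rfl⟩
          rw [← hR] at this
          simp only [Set.mem_singleton_iff]
          have : dist x z ≤ 0 := this
          rw [dist_comm] at this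
          exact dist_le_zero.1 this
        calc μ β ≤ μ {x} := measure_mono hβx
          _ = 0 := no_atom C hC hup μ D hD hμ x
          _ ≤ ENNReal.ofReal (2 * D ^ 2 * ρ ^ (1 / s)) := zero_le
      · obtain ⟨d₀, hd₀A, hd₀⟩ := exists_lt_of_lt_csSup hAne
          (half_lt_self hR)
        obtain ⟨y, hyβ, rfl⟩ := hd₀A
        have hdy : 0 < dist x y := lt_of_le_of_lt (by linarith) hd₀
        have hyx : y ≠ x := fun h => by rw [h, dist_self] at hdy; exact lt_irrefl _ hdy
        have hsum := (key y hyx).1 hyβ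
        have hβsub : β ⊆ closedBall y (2 ^ 2 * dist x y) := by
          intro z hz
          have hzR : dist x z ≤ sSup ((fun y => dist x y) '' β) := le_csSup hAbdd ⟨z, hz, rfl⟩
          simp only [mem_closedBall]
          calc dist z y ≤ dist z x + dist x y := dist_triangle z x y
            _ ≤ sSup ((fun y => dist x y) '' β) + dist x y := by
                rw [dist_comm]; exact add_le_add_left hzR _
            _ ≤ 2 * dist x y + dist x y := by
                have : sSup ((fun y => dist x y) '' β) ≤ 2 * dist x y := by linarith
                linarith
            _ ≤ 2 ^ 2 * dist x y := by nlinarith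
        calc μ β ≤ μ (closedBall y (2 ^ 2 * dist x y)) := measure_mono hβsub
          _ ≤ D' ^ 2 * μ (closedBall y (dist x y)) := doubling_pow hμ.2 y _ hdy 2
          _ ≤ D' ^ 2 * ENNReal.ofReal (ρ ^ (1 / s)) := by
              gcongr
              calc μ (closedBall y (dist x y))
                  ≤ μ (closedBall x (dist x y)) + μ (closedBall y (dist x y)) := le_add_self
                _ ≤ ENNReal.ofReal (ρ ^ (1 / s)) := hsum
          _ ≤ ENNReal.ofReal (2 * D ^ 2 * ρ ^ (1 / s)) := hconv
end

section
/- Let (X,d) be a metric space containing at least two points that is uniformly perfect with constant C ≥ 1, and let μ be a doubling measure on X with constant D ≥ 1. Then there exists s₀ > 0 such that for every 0 < s ≤ s₀ the canonical injection (X,d) → (X,q_{μ,s}) is quasisymmetric: there exists a homeomorphism η : [0,∞) → [0,∞) such that for all triples of distinct points x, a, b ∈ X, q_{μ,s}(x,a)/q_{μ,s}(x,b) ≤ η(d(x,a)/d(x,b)). -/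
open MeasureTheory Metric

section MyAux

lemma my_rpow_logb_comm {b x y : ℝ} (hb : 1 < b) (hx : 0 < x) (hy : 0 < y) :
    x ^ Real.logb b y = y ^ Real.logb b x := by
  have hb0 : 0 < b := lt_trans one_pos hb
  have hb1 : b ≠ 1 := hb.ne'
  calc x ^ Real.logb b y = (b ^ Real.logb b x) ^ Real.logb b y := by
        rw [Real.rpow_logb hb0 hb1 hx]
    _ = b ^ (Real.logb b x * Real.logb b y) := by rw [← Real.rpow_mul hb0.le]
    _ = (b ^ Real.logb b y) ^ Real.logb b x := by
        rw [← Real.rpow_mul hb0.le, mul_comm]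
    _ = y ^ Real.logb b x := by rw [Real.rpow_logb hb0 hb1 hy]

variable {X : Type*} [MetricSpace X] [MeasurableSpace X] [BorelSpace X]
variable {μ : Measure X} {D : ℝ}

/-- real-valued measure of closed ball -/
noncomputable def mB (μ : Measure X) (x : X) (r : ℝ) : ℝ := (μ (closedBall x r)).toReal

lemma mB_nonneg (x : X) (r : ℝ) : 0 ≤ mB μ x r := ENNReal.toReal_nonneg

variable (hfin : ∀ (x : X) (r : ℝ), 0 < r → 0 < μ (closedBall x r) ∧ μ (closedBall x r) < ⊤)

include hfin

lemma mB_pos (x : X) {r : ℝ} (hr : 0 < r) : 0 < mB μ x r :=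
  ENNReal.toReal_pos (hfin x r hr).1.ne' (hfin x r hr).2.ne

lemma mB_le_of_subset {x y : X} {r R : ℝ} (hR : 0 < R)
    (h : closedBall x r ⊆ closedBall y R) : mB μ x r ≤ mB μ y R :=
  ENNReal.toReal_mono (hfin y R hR).2.ne (measure_mono h)

lemma mB_mono (x : X) {r R : ℝ} (hr : 0 < r) (hrR : r ≤ R) : mB μ x r ≤ mB μ x R :=
  mB_le_of_subset hfin (lt_of_lt_of_le hr hrR)
    (closedBall_subset_closedBall hrR)

variable (hD : 1 ≤ D)
variable (hdbl : ∀ (x : X) (r : ℝ), 0 < r →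
    μ (closedBall x (2 * r)) ≤ ENNReal.ofReal D * μ (closedBall x r))

include hD hdbl

lemma mB_double (x : X) {r : ℝ} (hr : 0 < r) : mB μ x (2 * r) ≤ D * mB μ x r := by
  have h := hdbl x r hr
  have hfin' : ENNReal.ofReal D * μ (closedBall x r) ≠ ⊤ :=
    ENNReal.mul_ne_top ENNReal.ofReal_ne_top (hfin x r hr).2.ne
  calc mB μ x (2 * r) ≤ (ENNReal.ofReal D * μ (closedBall x r)).toReal :=
        ENNReal.toReal_mono hfin' h
    _ = D * mB μ x r := by
        rw [ENNReal.toReal_mul, ENNReal.toReal_ofReal (by linarith)]; rfl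

lemma mB_pow (x : X) {r : ℝ} (hr : 0 < r) (k : ℕ) :
    mB μ x (2 ^ k * r) ≤ D ^ k * mB μ x r := by
  induction k with
  | zero => simp
  | succ k ih =>
    have h2 : (2:ℝ) ^ (k + 1) * r = 2 * (2 ^ k * r) := by ring
    have hpos : 0 < (2:ℝ) ^ k * r := by positivity
    calc mB μ x (2 ^ (k + 1) * r) = mB μ x (2 * (2 ^ k * r)) := by rw [h2]
      _ ≤ D * mB μ x (2 ^ k * r) := mB_double hfin hD hdbl x hpos
      _ ≤ D * (D ^ k * mB μ x r) := by
          apply mul_le_mul_of_nonneg_left ih (by linarith)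
      _ = D ^ (k + 1) * mB μ x r := by ring

lemma mB_scale (x : X) {r lam : ℝ} (hr : 0 < r) (hlam : 1 ≤ lam) :
    mB μ x (lam * r) ≤ D * lam ^ Real.logb 2 D * mB μ x r := by
  have hD0 : (0:ℝ) < D := lt_of_lt_of_le one_pos hD
  have hlam0 : (0:ℝ) < lam := lt_of_lt_of_le one_pos hlam
  set k := ⌈Real.logb 2 lam⌉₊ with hk
  have hlognn : 0 ≤ Real.logb 2 lam := Real.logb_nonneg one_lt_two hlam
  have hk1 : lam ≤ (2:ℝ) ^ (k:ℝ) :=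
    (Real.logb_le_iff_le_rpow one_lt_two hlam0).mp (Nat.le_ceil _)
  have hk2 : lam ≤ (2:ℝ) ^ k := by rwa [Real.rpow_natCast] at hk1
  have h1 : mB μ x (lam * r) ≤ mB μ x (2 ^ k * r) :=
    mB_mono hfin x (by positivity) (mul_le_mul_of_nonneg_right hk2 hr.le)
  have h2 := mB_pow hfin hD hdbl x hr k
  have h3 : (D:ℝ) ^ k ≤ D * lam ^ Real.logb 2 D := by
    have hkle : (k:ℝ) ≤ Real.logb 2 lam + 1 := (Nat.ceil_lt_add_one hlognn).le
    calc (D:ℝ) ^ k = D ^ ((k:ℝ)) := (Real.rpow_natCast D k).symm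
      _ ≤ D ^ (Real.logb 2 lam + 1) := Real.rpow_le_rpow_of_exponent_le hD hkle
      _ = D ^ Real.logb 2 lam * D := by rw [Real.rpow_add hD0, Real.rpow_one]
      _ = D * lam ^ Real.logb 2 D := by
          rw [my_rpow_logb_comm one_lt_two hD0 hlam0, mul_comm]
  calc mB μ x (lam * r) ≤ D ^ k * mB μ x r := le_trans h1 h2
    _ ≤ D * lam ^ Real.logb 2 D * mB μ x r :=
        mul_le_mul_of_nonneg_right h3 (mB_nonneg x r)


variable {C : ℝ} (hC : 1 ≤ C)
variable (hup : ∀ (x : X) (r : ℝ), 0 < r → ENNReal.ofReal r ≤ EMetric.diam (Set.univ : Set X) →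
    ∃ y : X, r / C ≤ dist x y ∧ dist x y ≤ r)

include hC hup

lemma mB_rev_step (x : X) {R : ℝ} (hR : 0 < R)
    (hdiam : ENNReal.ofReal R ≤ EMetric.diam (Set.univ : Set X)) :
    (1 + ((D:ℝ) ^ ⌈Real.logb 2 (8*C)⌉₊)⁻¹) * mB μ x (R / (8*C)) ≤ mB μ x R := by
  have hC0 : (0:ℝ) < C := lt_of_lt_of_le one_pos hC
  have hD0 : (0:ℝ) < D := lt_of_lt_of_le one_pos hD
  set k₀ := ⌈Real.logb 2 (8*C)⌉₊ with hk₀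
  have h8C : (1:ℝ) < 8 * C := by linarith
  obtain ⟨y, hy1, hy2⟩ := hup x (R/2) (by positivity)
    (le_trans (ENNReal.ofReal_le_ofReal (by linarith)) hdiam)
  set ρ := R / (8*C) with hρdef
  have hρ : 0 < ρ := by positivity
  have hy1' : R / (2*C) ≤ dist x y := by
    rw [show R / (2*C) = R/2/C by rw [div_div]] ; exact hy1
  have h2ρ : ρ + ρ = R / (4*C) := by rw [hρdef]; field_simp; ring
  have hR4 : R/(4*C) ≤ R/2 := by
    rw [div_le_div_iff₀ (by linarith) (by norm_num)]
    nlinarith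
  have hρhalf : ρ ≤ R/2 := by linarith
  have hdisj : Disjoint (closedBall x ρ) (closedBall y ρ) := by
    apply closedBall_disjoint_closedBall
    have : R/(4*C) < R/(2*C) := by
      apply div_lt_div_of_pos_left hR (by linarith) (by linarith)
    linarith
  have hsub1 : closedBall x ρ ⊆ closedBall x R :=
    closedBall_subset_closedBall (by linarith)
  have hsub2 : closedBall y ρ ⊆ closedBall x R := by
    apply closedBall_subset_closedBall'
    rw [dist_comm]
    linarith
  -- superadditivity
  have hsum : mB μ x ρ + mB μ y ρ ≤ mB μ x R := by
    have hU : μ (closedBall x ρ ∪ closedBall y ρ) = μ (closedBall x ρ) + μ (closedBall y ρ) :=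
      measure_union hdisj measurableSet_closedBall
    have hle : μ (closedBall x ρ) + μ (closedBall y ρ) ≤ μ (closedBall x R) := by
      rw [← hU]; exact measure_mono (Set.union_subset hsub1 hsub2)
    have := ENNReal.toReal_mono (hfin x R hR).2.ne hle
    rwa [ENNReal.toReal_add (hfin x ρ hρ).2.ne (hfin y ρ hρ).2.ne] at this
  -- comparison of the two small balls
  have hk2 : 8 * C ≤ (2:ℝ) ^ k₀ := by
    have h1 : 8 * C ≤ (2:ℝ) ^ ((k₀:ℝ)) :=
      (Real.logb_le_iff_le_rpow one_lt_two (by linarith)).mp (Nat.le_ceil _)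
    rwa [Real.rpow_natCast] at h1
  have hcmp : mB μ x ρ ≤ D ^ k₀ * mB μ y ρ := by
    have hsub3 : closedBall x ρ ⊆ closedBall y (2 ^ k₀ * ρ) := by
      apply closedBall_subset_closedBall'
      have h2 : dist x y ≤ R / 2 := hy2
      have h3 : R = 8 * C * ρ := by rw [hρdef]; field_simp
      nlinarith [mul_le_mul_of_nonneg_right hk2 hρ.le]
    calc mB μ x ρ ≤ mB μ y (2 ^ k₀ * ρ) := mB_le_of_subset hfin (by positivity) hsub3
      _ ≤ D ^ k₀ * mB μ y ρ := mB_pow hfin hD hdbl y hρ k₀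
  have hDk : (0:ℝ) < D ^ k₀ := by positivity
  have h4 : ((D:ℝ) ^ k₀)⁻¹ * mB μ x ρ ≤ mB μ y ρ := by
    rw [inv_mul_le_iff₀ hDk]; exact hcmp
  linarith

lemma mB_rev_iter (x : X) (n : ℕ) :
    ∀ R : ℝ, 0 < R → ENNReal.ofReal R ≤ EMetric.diam (Set.univ : Set X) →
    mB μ x (R / (8*C) ^ n) ≤
      ((1 + ((D:ℝ) ^ ⌈Real.logb 2 (8*C)⌉₊)⁻¹)⁻¹) ^ n * mB μ x R := by
  have hC0 : (0:ℝ) < C := lt_of_lt_of_le one_pos hC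
  have hD0 : (0:ℝ) < D := lt_of_lt_of_le one_pos hD
  set θ := 1 + ((D:ℝ) ^ ⌈Real.logb 2 (8*C)⌉₊)⁻¹ with hθdef
  have hθ : 0 < θ := by positivity
  induction n with
  | zero => intro R hR _; simp
  | succ n ih =>
    intro R hR hdiam
    have h8C : (0:ℝ) < 8 * C := by linarith
    have hR' : 0 < R / (8*C) := by positivity
    have hle' : R / (8*C) ≤ R := by
      rw [div_le_iff₀ h8C]; nlinarith
    have hdiam' : ENNReal.ofReal (R / (8*C)) ≤ EMetric.diam (Set.univ : Set X) :=
      le_trans (ENNReal.ofReal_le_ofReal hle') hdiam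
    have heq : R / (8*C) ^ (n+1) = (R / (8*C)) / (8*C) ^ n := by
      rw [div_div, ← pow_succ']
    have h1 := ih (R / (8*C)) hR' hdiam'
    have h2 : θ * mB μ x (R / (8*C)) ≤ mB μ x R :=
      mB_rev_step hfin hD hdbl hC hup x hR hdiam
    have h3 : mB μ x (R / (8*C)) ≤ θ⁻¹ * mB μ x R := by
      rw [← inv_mul_le_iff₀ (inv_pos.mpr hθ), inv_inv]
      exact h2
    calc mB μ x (R / (8*C) ^ (n+1)) = mB μ x ((R / (8*C)) / (8*C) ^ n) := by rw [heq]
      _ ≤ θ⁻¹ ^ n * mB μ x (R / (8*C)) := h1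
      _ ≤ θ⁻¹ ^ n * (θ⁻¹ * mB μ x R) := by
          apply mul_le_mul_of_nonneg_left h3 (by positivity)
      _ = θ⁻¹ ^ (n+1) * mB μ x R := by ring

lemma mB_decay (x : X) {r R : ℝ} (hr : 0 < r) (hrR : r ≤ R)
    (hdiam : ENNReal.ofReal R ≤ EMetric.diam (Set.univ : Set X)) :
    mB μ x r ≤ (1 + ((D:ℝ) ^ ⌈Real.logb 2 (8*C)⌉₊)⁻¹) *
      (r / R) ^ Real.logb (8*C) (1 + ((D:ℝ) ^ ⌈Real.logb 2 (8*C)⌉₊)⁻¹) * mB μ x R := by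
  have hC0 : (0:ℝ) < C := lt_of_lt_of_le one_pos hC
  have hD0 : (0:ℝ) < D := lt_of_lt_of_le one_pos hD
  have h8C : (1:ℝ) < 8 * C := by linarith
  have hR : 0 < R := lt_of_lt_of_le hr hrR
  set θ := 1 + ((D:ℝ) ^ ⌈Real.logb 2 (8*C)⌉₊)⁻¹ with hθdef
  have hθ1 : 1 < θ := by
    rw [hθdef]
    have : (0:ℝ) < ((D:ℝ) ^ ⌈Real.logb 2 (8*C)⌉₊)⁻¹ := by positivity
    linarith
  have hθ0 : 0 < θ := by linarith
  set ε := Real.logb (8*C) θ with hεdef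
  set n := ⌊Real.logb (8*C) (R/r)⌋₊ with hn
  have hRr1 : 1 ≤ R / r := (one_le_div hr).mpr hrR
  have hRr0 : 0 < R / r := by positivity
  have hlognn : 0 ≤ Real.logb (8*C) (R/r) := Real.logb_nonneg h8C hRr1
  have hfl : (8*C) ^ ((n:ℝ)) ≤ R / r :=
    (Real.le_logb_iff_rpow_le h8C hRr0).mp (Nat.floor_le hlognn)
  have hfl' : (8*C) ^ n ≤ R / r := by rwa [Real.rpow_natCast] at hfl
  have h8Cn : (0:ℝ) < (8*C) ^ n := by positivity
  have hrle : r ≤ R / (8*C) ^ n := by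
    rw [le_div_iff₀ h8Cn]
    calc r * (8*C) ^ n ≤ r * (R / r) := by
          apply mul_le_mul_of_nonneg_left hfl' hr.le
      _ = R := by field_simp
  have h1 : mB μ x r ≤ mB μ x (R / (8*C) ^ n) := mB_mono hfin x hr hrle
  have h2 := mB_rev_iter hfin hD hdbl hC hup x n R hR hdiam
  have h3 : θ⁻¹ ^ n ≤ θ * (r / R) ^ ε := by
    have hlt : Real.logb (8*C) (R/r) < (n:ℝ) + 1 := Nat.lt_floor_add_one _
    have e1 : (θ:ℝ)⁻¹ ^ n = θ ^ (-(n:ℝ)) := by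
      rw [Real.rpow_neg hθ0.le, Real.rpow_natCast, inv_pow]
    have e2 : θ ^ (-(n:ℝ)) ≤ θ ^ (1 - Real.logb (8*C) (R/r)) := by
      apply Real.rpow_le_rpow_of_exponent_le hθ1.le
      linarith
    have e3 : θ ^ (1 - Real.logb (8*C) (R/r)) = θ * (r/R) ^ ε := by
      rw [sub_eq_add_neg, Real.rpow_add hθ0, Real.rpow_one]
      congr 1
      have hl : Real.logb (8*C) (r/R) = -Real.logb (8*C) (R/r) := by
        rw [show r / R = (R / r)⁻¹ by rw [inv_div], Real.logb_inv]
      rw [← hl]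
      exact my_rpow_logb_comm h8C hθ0 (div_pos hr hR)
    rw [e1]
    calc θ ^ (-(n:ℝ)) ≤ θ ^ (1 - Real.logb (8*C) (R/r)) := e2
      _ = θ * (r/R) ^ ε := e3
  calc mB μ x r ≤ θ⁻¹ ^ n * mB μ x R := le_trans h1 h2
    _ ≤ θ * (r/R) ^ ε * mB μ x R :=
        mul_le_mul_of_nonneg_right h3 (mB_nonneg x R)


end MyAux

section MyHomeo
open Filter

lemma my_exists_homeo (K A B s : ℝ) (hK : 0 < K) (hA : 0 < A) (hB : 0 < B) (hs : 0 < s) :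
    ∃ η : Homeomorph (Set.Ici (0:ℝ)) (Set.Ici (0:ℝ)),
      ∀ (t : ℝ) (ht : 0 ≤ t), (η ⟨t, Set.mem_Ici.mpr ht⟩ : ℝ) = (K * (t ^ A + t ^ B)) ^ s := by
  set g : ℝ → ℝ := fun t => (K * (t ^ A + t ^ B)) ^ s with hg
  have hcont : Continuous g := by
    have h1 : Continuous fun t : ℝ => t ^ A :=
      continuous_iff_continuousAt.mpr fun x => Real.continuousAt_rpow_const x A (Or.inr hA.le)
    have h2 : Continuous fun t : ℝ => t ^ B :=
      continuous_iff_continuousAt.mpr fun x => Real.continuousAt_rpow_const x B (Or.inr hB.le)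
    have h3 : Continuous fun t : ℝ => K * (t ^ A + t ^ B) := continuous_const.mul (h1.add h2)
    exact continuous_iff_continuousAt.mpr fun x =>
      (Real.continuousAt_rpow_const _ s (Or.inr hs.le)).comp h3.continuousAt
  have hmono : StrictMonoOn g (Set.Ici 0) := by
    intro t1 h1 t2 h2 hlt
    have h1' : (0:ℝ) ≤ t1 := h1
    have inner : K * (t1 ^ A + t1 ^ B) < K * (t2 ^ A + t2 ^ B) :=
      mul_lt_mul_of_pos_left
        (add_lt_add (Real.rpow_lt_rpow h1' hlt hA) (Real.rpow_lt_rpow h1' hlt hB)) hK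
    exact Real.rpow_lt_rpow
      (mul_nonneg hK.le (add_nonneg (Real.rpow_nonneg h1' A) (Real.rpow_nonneg h1' B)))
      inner hs
  have hg0 : g 0 = 0 := by
    simp [hg, Real.zero_rpow hA.ne', Real.zero_rpow hB.ne', Real.zero_rpow hs.ne']
  have gnonneg : ∀ t : ℝ, 0 ≤ t → 0 ≤ g t := fun t ht =>
    Real.rpow_nonneg
      (mul_nonneg hK.le (add_nonneg (Real.rpow_nonneg ht A) (Real.rpow_nonneg ht B))) s
  have htend : Tendsto g atTop atTop := by
    have h1 : Tendsto (fun t : ℝ => t ^ A + t ^ B) atTop atTop := by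
      apply tendsto_atTop_mono' atTop (f₁ := fun t : ℝ => t ^ B)
      · filter_upwards [eventually_ge_atTop (0:ℝ)] with t ht
        have := Real.rpow_nonneg ht A
        linarith
      · exact tendsto_rpow_atTop hB
    exact (tendsto_rpow_atTop hs).comp (h1.const_mul_atTop hK)
  have hsurj : ∀ y : ℝ, 0 ≤ y → ∃ t, 0 ≤ t ∧ g t = y := by
    intro y hy
    obtain ⟨T0, hT0⟩ := eventually_atTop.mp (htend.eventually_ge_atTop y)
    set T := max T0 0 with hT
    have h0T : (0:ℝ) ≤ T := le_max_right _ _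
    have hgT : y ≤ g T := hT0 T (le_max_left _ _)
    have hy' : y ∈ Set.Icc (g 0) (g T) := ⟨by rw [hg0]; exact hy, hgT⟩
    obtain ⟨t, ht, hgt⟩ := intermediate_value_Icc h0T hcont.continuousOn hy'
    exact ⟨t, ht.1, hgt⟩
  let f : Set.Ici (0:ℝ) → Set.Ici (0:ℝ) := fun t => ⟨g t, Set.mem_Ici.mpr (gnonneg t t.2)⟩
  have hf : StrictMono f := by
    intro t1 t2 h
    exact Subtype.mk_lt_mk.mpr (hmono t1.2 t2.2 h)
  have hfs : Function.Surjective f := by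
    rintro ⟨y, hy⟩
    obtain ⟨t, ht, hgt⟩ := hsurj y hy
    exact ⟨⟨t, ht⟩, Subtype.ext hgt⟩
  exact ⟨(StrictMono.orderIsoOfSurjective f hf hfs).toHomeomorph, fun t ht => rfl⟩

end MyHomeo

theorem stmt11 {X : Type*} [MetricSpace X] [Nontrivial X]
    [MeasurableSpace X] [BorelSpace X]
    (C : ℝ) (hC : 1 ≤ C) (hup : UniformlyPerfect X C)
    (μ : Measure X) (D : ℝ) (hD : 1 ≤ D) (hμ : IsDoublingMeasure μ D) :
    ∃ s₀ : ℝ, 0 < s₀ ∧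
      ∀ s : ℝ, 0 < s → s ≤ s₀ →
        ∃ η : Homeomorph (Set.Ici (0:ℝ)) (Set.Ici (0:ℝ)),
          ∀ x a b : X, x ≠ a → x ≠ b → a ≠ b →
            qms μ s x a / qms μ s x b ≤
              (η ⟨dist x a / dist x b, Set.mem_Ici.mpr (by positivity)⟩ : ℝ) := by
  obtain ⟨hfin, hdbl⟩ := hμ
  have hup' : ∀ (x : X) (r : ℝ), 0 < r → ENNReal.ofReal r ≤ EMetric.diam (Set.univ : Set X) →
      ∃ y : X, r / C ≤ dist x y ∧ dist x y ≤ r := hup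
  have hD0 : (0:ℝ) < D := lt_of_lt_of_le one_pos hD
  have hC0 : (0:ℝ) < C := lt_of_lt_of_le one_pos hC
  have h8C : (1:ℝ) < 8 * C := by linarith
  set θ := 1 + ((D:ℝ) ^ ⌈Real.logb 2 (8*C)⌉₊)⁻¹ with hθdef
  have hθ1 : 1 < θ := by
    rw [hθdef]
    have : (0:ℝ) < ((D:ℝ) ^ ⌈Real.logb 2 (8*C)⌉₊)⁻¹ := by positivity
    linarith
  have hθ0 : (0:ℝ) < θ := by linarith
  set A := Real.logb (8*C) θ with hAdef
  have hA : 0 < A := Real.logb_pos h8C hθ1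
  set B := Real.logb 2 D + 1 with hBdef
  have hB : 0 < B := by
    have := Real.logb_nonneg one_lt_two hD
    rw [hBdef]; linarith
  set K := (1+D) * D * θ with hKdef
  have hK : 0 < K := mul_pos (mul_pos (by linarith) hD0) hθ0
  refine ⟨1, one_pos, fun s hs _ => ?_⟩
  obtain ⟨η, hη⟩ := my_exists_homeo K A B s hK hA hB hs
  refine ⟨η, fun x a b hxa hxb hab => ?_⟩
  rw [hη _ (by positivity)]
  have hda0 : 0 < dist x a := dist_pos.mpr hxa
  have hdb0 : 0 < dist x b := dist_pos.mpr hxb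
  set da := dist x a with hda
  set db := dist x b with hdb
  set t := da / db with htdef
  have ht0 : 0 < t := div_pos hda0 hdb0
  have hQa : qms μ s x a = (mB μ x da + mB μ a da) ^ s := by
    simp only [qms, if_neg hxa, mB, ← hda]
    rw [ENNReal.toReal_add (hfin x da hda0).2.ne (hfin a da hda0).2.ne]
  have hQb : qms μ s x b = (mB μ x db + mB μ b db) ^ s := by
    simp only [qms, if_neg hxb, mB, ← hdb]
    rw [ENNReal.toReal_add (hfin x db hdb0).2.ne (hfin b db hdb0).2.ne]
  have hQa0 : 0 < mB μ x da + mB μ a da :=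
    add_pos (mB_pos hfin x hda0) (mB_pos hfin a hda0)
  have hQb0 : 0 < mB μ x db + mB μ b db :=
    add_pos (mB_pos hfin x hdb0) (mB_pos hfin b hdb0)
  have hmbxQb : mB μ x db ≤ mB μ x db + mB μ b db :=
    le_add_of_nonneg_right (mB_nonneg b db)
  -- bound mB μ a da by D * mB μ x da
  have hma : mB μ a da ≤ D * mB μ x da := by
    have hsub : closedBall a da ⊆ closedBall x (2*da) :=
      closedBall_subset_closedBall' (by rw [dist_comm]; linarith)
    exact le_trans (mB_le_of_subset hfin (by positivity) hsub)
      (mB_double hfin hD hdbl x hda0)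
  have hQaup : mB μ x da + mB μ a da ≤ (1+D) * mB μ x da := by linarith
  have hta : (0:ℝ) ≤ t ^ A := Real.rpow_nonneg ht0.le A
  have htb : (0:ℝ) ≤ t ^ B := Real.rpow_nonneg ht0.le B
  -- the key estimate
  have hkey : mB μ x da + mB μ a da ≤ K * (t ^ A + t ^ B) * (mB μ x db + mB μ b db) := by
    rcases le_or_gt db da with hcase | hcase
    · -- t ≥ 1
      have ht1 : 1 ≤ t := (one_le_div hdb0).mpr hcase
      have hlam : t * db = da := by rw [htdef]; field_simp
      have h2 : mB μ x da ≤ D * t ^ Real.logb 2 D * mB μ x db := by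
        rw [← hlam]
        exact mB_scale hfin hD hdbl x hdb0 ht1
      have h3 : t ^ Real.logb 2 D ≤ t ^ B :=
        Real.rpow_le_rpow_of_exponent_le ht1 (by rw [hBdef]; linarith)
      have h5 : t ^ B ≤ θ * (t ^ A + t ^ B) := by nlinarith
      calc mB μ x da + mB μ a da ≤ (1+D) * mB μ x da := hQaup
        _ ≤ (1+D) * (D * t ^ Real.logb 2 D * mB μ x db) :=
            mul_le_mul_of_nonneg_left h2 (by linarith)
        _ ≤ (1+D) * (D * t ^ B * mB μ x db) := by
            apply mul_le_mul_of_nonneg_left _ (by linarith : (0:ℝ) ≤ 1+D)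
            exact mul_le_mul_of_nonneg_right
              (mul_le_mul_of_nonneg_left h3 hD0.le) (mB_nonneg x db)
        _ ≤ (1+D) * (D * t ^ B * (mB μ x db + mB μ b db)) := by
            apply mul_le_mul_of_nonneg_left _ (by linarith : (0:ℝ) ≤ 1+D)
            exact mul_le_mul_of_nonneg_left hmbxQb (by positivity)
        _ ≤ K * (t ^ A + t ^ B) * (mB μ x db + mB μ b db) := by
            rw [hKdef]
            calc (1+D) * (D * t ^ B * (mB μ x db + mB μ b db))
                = (1+D) * D * (t ^ B) * (mB μ x db + mB μ b db) := by ring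
              _ ≤ (1+D) * D * (θ * (t ^ A + t ^ B)) * (mB μ x db + mB μ b db) := by
                  apply mul_le_mul_of_nonneg_right _ hQb0.le
                  exact mul_le_mul_of_nonneg_left h5
                    (mul_nonneg (by linarith) hD0.le)
              _ = (1+D) * D * θ * (t ^ A + t ^ B) * (mB μ x db + mB μ b db) := by ring
    · -- t < 1
      have hdiam : ENNReal.ofReal db ≤ EMetric.diam (Set.univ : Set X) := by
        rw [hdb, ← edist_dist]
        exact EMetric.edist_le_diam_of_mem (Set.mem_univ x) (Set.mem_univ b)
      have h2 : mB μ x da ≤ θ * t ^ A * mB μ x db :=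
        mB_decay hfin hD hdbl hC hup' x hda0 hcase.le hdiam
      have h6 : θ * t ^ A ≤ D * θ * (t ^ A + t ^ B) := by
        nlinarith [mul_nonneg (mul_nonneg (by linarith : (0:ℝ) ≤ D - 1) hθ0.le) hta,
          mul_nonneg (mul_nonneg hD0.le hθ0.le) htb]
      calc mB μ x da + mB μ a da ≤ (1+D) * mB μ x da := hQaup
        _ ≤ (1+D) * (θ * t ^ A * mB μ x db) :=
            mul_le_mul_of_nonneg_left h2 (by linarith)
        _ ≤ (1+D) * (θ * t ^ A * (mB μ x db + mB μ b db)) := by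
            apply mul_le_mul_of_nonneg_left _ (by linarith : (0:ℝ) ≤ 1+D)
            exact mul_le_mul_of_nonneg_left hmbxQb (mul_nonneg hθ0.le hta)
        _ ≤ K * (t ^ A + t ^ B) * (mB μ x db + mB μ b db) := by
            rw [hKdef]
            calc (1+D) * (θ * t ^ A * (mB μ x db + mB μ b db))
                = (1+D) * (θ * t ^ A) * (mB μ x db + mB μ b db) := by ring
              _ ≤ (1+D) * (D * θ * (t ^ A + t ^ B)) * (mB μ x db + mB μ b db) := by
                  apply mul_le_mul_of_nonneg_right _ hQb0.le
                  exact mul_le_mul_of_nonneg_left h6 (by linarith)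
              _ = (1+D) * D * θ * (t ^ A + t ^ B) * (mB μ x db + mB μ b db) := by ring
  rw [hQa, hQb, ← Real.div_rpow hQa0.le hQb0.le]
  apply Real.rpow_le_rpow (by positivity) _ hs.le
  rw [div_le_iff₀ hQb0]
  exact hkey
end

section
/- Let (X,d) be a metric space containing at least two points that is uniformly perfect with constant C ≥ 1, and let μ be a doubling measure on X with constant D ≥ 1. Then μ has no atoms: μ({x}) = 0 for every x ∈ X. -/
open MeasureTheory Metric

theorem stmt12 {X : Type*} [MetricSpace X] [Nontrivial X]
    [MeasurableSpace X] [BorelSpace X]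
    (C : ℝ) (hC : 1 ≤ C) (hup : UniformlyPerfect X C)
    (μ : Measure X) (D : ℝ) (hD : 1 ≤ D) (hμ : IsDoublingMeasure μ D) :
    ∀ x : X, μ {x} = 0 := by
  obtain ⟨hfin, hdbl⟩ := hμ
  intro x
  have hC0 : (0:ℝ) < C := lt_of_lt_of_le one_pos hC
  -- a positive radius below the diameter
  obtain ⟨a, b, hab⟩ := exists_pair_ne X
  have hr0 : 0 < dist a b := dist_pos.2 hab
  set r0 : ℝ := dist a b with hr0def
  have hr0diam : ENNReal.ofReal r0 ≤ EMetric.diam (Set.univ : Set X) := by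
    rw [hr0def, ← edist_dist]
    exact EMetric.edist_le_diam_of_mem (Set.mem_univ a) (Set.mem_univ b)
  set DN : ENNReal := ENNReal.ofReal D with hDNdef
  have hDN1 : 1 ≤ DN := by
    rw [hDNdef]; exact ENNReal.one_le_ofReal.2 hD
  have hDNtop : DN ≠ ⊤ := ENNReal.ofReal_ne_top
  have hDN0 : DN ≠ 0 := by
    intro h; rw [h] at hDN1; exact (not_le.2 zero_lt_one) hDN1
  -- iterated doubling
  have hiter : ∀ (k : ℕ) (z : X) (s : ℝ), 0 < s →
      μ (closedBall z (2 ^ k * s)) ≤ DN ^ k * μ (closedBall z s) := by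
    intro k
    induction k with
    | zero => intro z s hs; simp
    | succ k ih =>
      intro z s hs
      have h1 : (2:ℝ) ^ (k+1) * s = 2 * (2 ^ k * s) := by ring
      rw [h1]
      calc μ (closedBall z (2 * (2 ^ k * s)))
          ≤ DN * μ (closedBall z (2 ^ k * s)) := hdbl z _ (by positivity)
        _ ≤ DN * (DN ^ k * μ (closedBall z s)) := mul_le_mul_right (ih z s hs) _
        _ = DN ^ (k+1) * μ (closedBall z s) := by rw [pow_succ]; ring
  -- choose k with 12 * C ≤ 2 ^ k
  obtain ⟨k, hk⟩ := pow_unbounded_of_one_lt (12 * C) (by norm_num : (1:ℝ) < 2)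
  have hDk0 : DN ^ k ≠ 0 := pow_ne_zero _ hDN0
  have hDktop : DN ^ k ≠ ⊤ := ENNReal.pow_ne_top hDNtop
  set e : ENNReal := (DN ^ k)⁻¹ with hedef
  have he0 : e ≠ 0 := by
    rw [hedef]; exact ENNReal.inv_ne_zero.2 hDktop
  have hecancel : e * DN ^ k = 1 := by
    rw [hedef]; exact ENNReal.inv_mul_cancel hDk0 hDktop
  set c : ENNReal := 1 - e with hcdef
  have hc1 : c < 1 := ENNReal.sub_lt_self ENNReal.one_ne_top one_ne_zero he0
  -- key contraction step
  have hstep : ∀ r : ℝ, 0 < r → r ≤ r0 →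
      μ (closedBall x (r / (4 * C))) ≤ c * μ (closedBall x (2 * r)) := by
    intro r hr hrr0
    have hrdiam : ENNReal.ofReal r ≤ EMetric.diam (Set.univ : Set X) :=
      le_trans (ENNReal.ofReal_le_ofReal hrr0) hr0diam
    obtain ⟨y, hy1, hy2⟩ := hup x r hr hrdiam
    set s : ℝ := r / (4 * C) with hsdef
    have hs : 0 < s := by positivity
    have hsle : 4 * s ≤ dist x y := by
      have : 4 * s = r / C := by rw [hsdef]; field_simp
      rw [this]; exact hy1
    -- disjointness of the two small balls
    have hdisj : Disjoint (closedBall x s) (closedBall y s) := by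
      apply Set.disjoint_left.2
      intro z hz1 hz2
      have : dist x y ≤ 2 * s := by
        calc dist x y ≤ dist x z + dist z y := dist_triangle x z y
          _ ≤ s + s := add_le_add (mem_closedBall'.1 hz1) (mem_closedBall.1 hz2)
          _ = 2 * s := by ring
      linarith [hsle, hs]
    -- both small balls inside the big ball
    have hsub1 : closedBall x s ⊆ closedBall x (2 * r) := by
      apply closedBall_subset_closedBall
      rw [hsdef]
      rw [div_le_iff₀ (by positivity : (0:ℝ) < 4 * C)]
      nlinarith
    have hsub2 : closedBall y s ⊆ closedBall x (2 * r) := by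
      apply closedBall_subset_closedBall'
      have : s ≤ r := by
        rw [hsdef, div_le_iff₀ (by positivity : (0:ℝ) < 4 * C)]
        nlinarith
      calc s + dist y x ≤ r + r := add_le_add this (by rw [dist_comm]; exact hy2)
        _ = 2 * r := by ring
    -- the sum bound
    have hsum : μ (closedBall x s) + μ (closedBall y s) ≤ μ (closedBall x (2 * r)) := by
      rw [← measure_union hdisj measurableSet_closedBall]
      exact measure_mono (Set.union_subset hsub1 hsub2)
    -- the big ball has comparable measure to the small ball around y
    have hbig : μ (closedBall x (2 * r)) ≤ DN ^ k * μ (closedBall y s) := by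
      calc μ (closedBall x (2 * r)) ≤ μ (closedBall y (2 ^ k * s)) := by
            apply measure_mono
            apply closedBall_subset_closedBall'
            have h3r : 3 * r ≤ 2 ^ k * s := by
              rw [hsdef, mul_div_assoc', le_div_iff₀ (by positivity : (0:ℝ) < 4 * C)]
              nlinarith [mul_le_mul_of_nonneg_right hk.le hr.le]
            calc 2 * r + dist x y ≤ 2 * r + r := by linarith [hy2]
              _ = 3 * r := by ring
              _ ≤ 2 ^ k * s := h3r
        _ ≤ DN ^ k * μ (closedBall y s) := hiter k y s hs
    have hylow : e * μ (closedBall x (2 * r)) ≤ μ (closedBall y s) := by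
      calc e * μ (closedBall x (2 * r)) ≤ e * (DN ^ k * μ (closedBall y s)) :=
            mul_le_mul_right hbig _
        _ = (e * DN ^ k) * μ (closedBall y s) := by rw [mul_assoc]
        _ = μ (closedBall y s) := by rw [hecancel, one_mul]
    have hMtop : μ (closedBall x (2 * r)) ≠ ⊤ := (hfin x (2 * r) (by positivity)).2.ne
    calc μ (closedBall x s)
        ≤ μ (closedBall x (2 * r)) - μ (closedBall y s) := ENNReal.le_sub_of_add_le_right
          (ne_top_of_le_ne_top (hfin x (2 * r) (by positivity)).2.ne
            (measure_mono hsub2)) hsum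
      _ ≤ μ (closedBall x (2 * r)) - e * μ (closedBall x (2 * r)) :=
          tsub_le_tsub le_rfl hylow
      _ = c * μ (closedBall x (2 * r)) := by
          rw [hcdef, ENNReal.sub_mul (fun _ _ => hMtop), one_mul]
  -- the radii sequence
  have h8C : (1:ℝ) < 8 * C := by linarith
  have h8C0 : (0:ℝ) < 8 * C := by linarith
  set rn : ℕ → ℝ := fun n => r0 / (8 * C) ^ n with hrndef
  have hrnpos : ∀ n, 0 < rn n := fun n => by
    rw [hrndef]; positivity
  have hrnle : ∀ n, rn n ≤ r0 := fun n => by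
    rw [hrndef]
    simp only []
    rw [div_le_iff₀ (by positivity)]
    nlinarith [one_le_pow₀ (le_of_lt h8C) (n := n), hr0]
  set f : ℕ → ENNReal := fun n => μ (closedBall x (2 * rn n)) with hfdef
  have hfstep : ∀ n, f (n + 1) ≤ c * f n := by
    intro n
    have hr2 : 2 * rn (n + 1) = rn n / (4 * C) := by
      rw [hrndef]
      simp only []
      rw [pow_succ]
      field_simp
      ring
    rw [hfdef]
    simp only []
    rw [hr2]
    exact hstep (rn n) (hrnpos n) (hrnle n)
  have hfbound : ∀ n, f n ≤ c ^ n * f 0 := by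
    intro n
    induction n with
    | zero => simp
    | succ n ih =>
      calc f (n + 1) ≤ c * f n := hfstep n
        _ ≤ c * (c ^ n * f 0) := mul_le_mul_right ih _
        _ = c ^ (n + 1) * f 0 := by rw [pow_succ]; ring
  have hxf : ∀ n, μ {x} ≤ f n := fun n =>
    measure_mono (Set.singleton_subset_iff.2 (mem_closedBall_self (by positivity)))
  have hf0top : f 0 ≠ ⊤ := (hfin x (2 * rn 0) (by positivity)).2.ne
  have htend : Filter.Tendsto (fun n => c ^ n * f 0) Filter.atTop (nhds 0) := by
    have := ENNReal.Tendsto.mul_const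
      (ENNReal.tendsto_pow_atTop_nhds_zero_of_lt_one hc1) (Or.inr hf0top)
    simpa using this
  have : μ {x} ≤ 0 :=
    ge_of_tendsto' htend (fun n => le_trans (hxf n) (hfbound n))
  exact le_antisymm this zero_le
end
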